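/- arXiv:2010.01022 — 4 statements merged into one kernel-verified Lean document; each statement's English description precedes it below -/
import Mathlib

section
/- For every k ≥ 1, set a(k) = (k/(k+1)) · (k+1)^{-1/k} ∈ (0,1); then a(k) → 1 as k → ∞, and for all l, n ≥ 1 and every nonzero polynomial P ∈ ℤ[X] of degree < n with coefficients bounded in absolute value by l, the number of nonzero roots of P of absolute value less than a(k) is at most k·(1 + log l / log(k+1)). -/
open Polynomial
open scoped Classical

noncomputable def aFun (k : ℕ) : ℝ := ((k : ℝ) / ((k : ℝ) + 1)) * ((k : ℝ) + 1) ^ (-(1 : ℝ) / k)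

noncomputable def Complex.abs : AbsoluteValue ℂ ℝ where
  toFun z := ‖z‖
  map_mul' := norm_mul
  nonneg' := norm_nonneg
  eq_zero' _ := norm_eq_zero
  add_le' := norm_add_le

theorem Complex.abs_ofReal (r : ℝ) : Complex.abs (r : ℂ) = |r| := Complex.norm_real r

theorem Complex.abs_intCast (n : ℤ) : Complex.abs (n : ℂ) = |(n : ℝ)| := Complex.norm_intCast n

namespace StmtAux

open Real Filter Multiset

lemma abs_multiset_prod (R : Multiset ℂ) :
    Complex.abs R.prod = (R.map (fun z => Complex.abs z)).prod := by
  induction R using Multiset.induction with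
  | empty => simp
  | cons a s ih => simp [ih]

lemma finset_prod_multiset_prod {α β M : Type*} [CommMonoid M] (s : Finset α)
    (R : Multiset β) (f : α → β → M) :
    ∏ i ∈ s, (R.map (f i)).prod = (R.map (fun x => ∏ i ∈ s, f i x)).prod := by
  induction R using Multiset.induction with
  | empty => simp
  | cons a t ih => simp [Multiset.map_cons, Multiset.prod_cons, Finset.prod_mul_distrib, ih]

lemma prod_map_nonneg {β : Type*} (R : Multiset β) (f : β → ℝ)
    (h : ∀ x ∈ R, 0 ≤ f x) : 0 ≤ (R.map f).prod := by
  induction R using Multiset.induction with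
  | empty => simp
  | cons a t ih =>
      simp only [Multiset.map_cons, Multiset.prod_cons]
      exact mul_nonneg (h a (Multiset.mem_cons_self a t))
        (ih fun x hx => h x (Multiset.mem_cons_of_mem hx))

lemma prod_map_pos {β : Type*} (R : Multiset β) (f : β → ℝ)
    (h : ∀ x ∈ R, 0 < f x) : 0 < (R.map f).prod := by
  induction R using Multiset.induction with
  | empty => simp
  | cons a t ih =>
      simp only [Multiset.map_cons, Multiset.prod_cons]
      exact mul_pos (h a (Multiset.mem_cons_self a t))
        (ih fun x hx => h x (Multiset.mem_cons_of_mem hx))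

lemma prod_map_le_prod_map {β : Type*} (R : Multiset β) (f g : β → ℝ)
    (h0 : ∀ x ∈ R, 0 ≤ f x) (h : ∀ x ∈ R, f x ≤ g x) :
    (R.map f).prod ≤ (R.map g).prod := by
  induction R using Multiset.induction with
  | empty => simp
  | cons a t ih =>
      simp only [Multiset.map_cons, Multiset.prod_cons]
      have hf0 : 0 ≤ (t.map f).prod :=
        prod_map_nonneg t f fun x hx => h0 x (Multiset.mem_cons_of_mem hx)
      exact mul_le_mul (h a (Multiset.mem_cons_self a t))
        (ih (fun x hx => h0 x (Multiset.mem_cons_of_mem hx))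
            (fun x hx => h x (Multiset.mem_cons_of_mem hx)))
        hf0 ((h0 a (Multiset.mem_cons_self a t)).trans (h a (Multiset.mem_cons_self a t)))

lemma prod_nthRoots_sub (m : ℕ) (hm : 0 < m) (x : ℂ) :
    ∏ μ ∈ Polynomial.nthRootsFinset m (1 : ℂ), (x - μ) = x ^ m - 1 := by
  have h := Complex.isPrimitiveRoot_exp m hm.ne'
  have h2 := Polynomial.X_pow_sub_one_eq_prod hm h
  have h3 := congrArg (Polynomial.eval x) h2
  simpa [Polynomial.eval_prod] using h3.symm

lemma card_nthRootsC (m : ℕ) (hm : 0 < m) :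
    (Polynomial.nthRootsFinset m (1 : ℂ)).card = m :=
  (Complex.isPrimitiveRoot_exp m hm.ne').card_nthRootsFinset

lemma abs_of_mem_nthRoots {m : ℕ} (hm : 0 < m) {μ : ℂ}
    (hμ : μ ∈ Polynomial.nthRootsFinset m (1 : ℂ)) : Complex.abs μ = 1 := by
  have h1 : μ ^ m = 1 := (Polynomial.mem_nthRootsFinset hm 1).1 hμ
  have h2 : Complex.abs μ ^ m = 1 := by
    rw [← map_pow, h1, map_one]
  rcases lt_trichotomy (Complex.abs μ) 1 with h | h | h
  · have := pow_lt_one₀ (by positivity : (0:ℝ) ≤ Complex.abs μ) h hm.ne'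
    linarith
  · exact h
  · have := one_lt_pow₀ h hm.ne'
    linarith

lemma abs_prod_scaled (m : ℕ) (hm : 0 < m) (r : ℝ) (hr : 0 < r) (α : ℂ) :
    ∏ μ ∈ Polynomial.nthRootsFinset m (1 : ℂ), Complex.abs ((r : ℂ) * μ - α)
      = Complex.abs (α ^ m - (r : ℂ) ^ m) := by
  have hrc : (r : ℂ) ≠ 0 := by exact_mod_cast hr.ne'
  rw [← map_prod Complex.abs]
  have h1 : ∏ μ ∈ Polynomial.nthRootsFinset m (1 : ℂ), ((r : ℂ) * μ - α)
      = ∏ μ ∈ Polynomial.nthRootsFinset m (1 : ℂ), ((-(r : ℂ)) * (α / (r : ℂ) - μ)) := by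
    refine Finset.prod_congr rfl fun μ _ => ?_
    field_simp
    ring
  rw [h1, Finset.prod_mul_distrib, Finset.prod_const, card_nthRootsC m hm,
    prod_nthRoots_sub m hm]
  have h2 : (-(r : ℂ)) ^ m * ((α / (r : ℂ)) ^ m - 1) = (-1) ^ m * (α ^ m - (r : ℂ) ^ m) := by
    rw [neg_pow, div_pow, neg_pow]
    field_simp
  rw [h2, map_mul, map_pow, map_neg_eq_map, map_one, one_pow, one_mul]

lemma pow_sub_pow_lb {b u : ℝ} (hb : 0 ≤ b) (hbu : b ≤ u) {m : ℕ} (hm : 1 ≤ m) :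
    u ^ (m - 1) * (u - b) ≤ u ^ m - b ^ m := by
  obtain ⟨m', rfl⟩ : ∃ m', m = m' + 1 := ⟨m - 1, (Nat.succ_pred_eq_of_pos hm).symm⟩
  simp only [Nat.add_sub_cancel]
  have h1 : b ^ (m' + 1) ≤ b * u ^ m' := by
    rw [pow_succ']
    exact mul_le_mul_of_nonneg_left (pow_le_pow_left₀ hb hbu m') hb
  have h2 : u ^ (m' + 1) = u * u ^ m' := by ring
  nlinarith [pow_nonneg (hb.trans hbu) m']

lemma key_radius (l : ℕ) (hl : 1 ≤ l) (Q : Polynomial ℤ) (hQ0 : Q.coeff 0 ≠ 0)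
    (hcoeff : ∀ i, |Q.coeff i| ≤ (l : ℤ)) {a r' : ℝ} (ha : 0 < a) (har : a < r')
    (hr1 : r' < 1)
    (hmod : ∀ α ∈ (Q.map (Int.castRingHom ℂ)).roots, Complex.abs α ≠ r') :
    (r' / a) ^ (Multiset.card ((Q.map (Int.castRingHom ℂ)).roots.filter
        (fun z => Complex.abs z < a))) ≤ (l : ℝ) / (1 - r') := by
  classical
  set Qc := Q.map (Int.castRingHom ℂ) with hQc
  have hQne : Q ≠ 0 := fun h => hQ0 (by simp [h])
  have hQcne : Qc ≠ 0 :=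
    (Polynomial.map_ne_zero_iff (Int.cast_injective (α := ℂ))).2 hQne
  set R := Qc.roots with hR
  set c := Complex.abs Qc.leadingCoeff with hc
  have hcpos : 0 < c := by
    rw [hc]
    exact AbsoluteValue.pos _ (Polynomial.leadingCoeff_ne_zero.2 hQcne)
  have hr0 : 0 < r' := ha.trans har
  have hl0 : (0 : ℝ) < l := by exact_mod_cast hl
  have hLpos : 0 < (l : ℝ) / (1 - r') := div_pos hl0 (by linarith)
  -- factorization and evaluation formula
  have heval : ∀ x : ℂ, Complex.abs (Qc.eval x)
      = c * (R.map (fun α => Complex.abs (x - α))).prod := by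
    intro x
    have hsplit : Qc = Polynomial.C Qc.leadingCoeff
        * (R.map fun α => Polynomial.X - Polynomial.C α).prod :=
      (Polynomial.C_leadingCoeff_mul_prod_multiset_X_sub_C IsAlgClosed.card_roots_eq_natDegree).symm
    conv_lhs => rw [hsplit]
    rw [Polynomial.eval_mul, Polynomial.eval_C, Polynomial.eval_multiset_prod, map_mul,
      abs_multiset_prod, Multiset.map_map, Multiset.map_map]
    congr 1
    refine congrArg Multiset.prod (Multiset.map_congr rfl fun α _ => ?_)
    simp
  -- the upper bound on the circle of radius r'
  have hub : ∀ x : ℂ, Complex.abs x = r' →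
      Complex.abs (Qc.eval x) ≤ (l : ℝ) / (1 - r') := by
    intro x hx
    rw [Polynomial.eval_eq_sum_range]
    set D := Qc.natDegree + 1
    calc Complex.abs (∑ i ∈ Finset.range D, Qc.coeff i * x ^ i)
        ≤ ∑ i ∈ Finset.range D, Complex.abs (Qc.coeff i * x ^ i) :=
          AbsoluteValue.sum_le _ _ _
      _ ≤ ∑ i ∈ Finset.range D, (l : ℝ) * r' ^ i := by
          refine Finset.sum_le_sum fun i _ => ?_
          rw [map_mul, map_pow, hx]
          refine mul_le_mul_of_nonneg_right ?_ (by positivity)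
          have : Qc.coeff i = ((Q.coeff i : ℤ) : ℂ) := by
            rw [hQc, Polynomial.coeff_map]; rfl
          rw [this, Complex.abs_intCast]
          exact_mod_cast hcoeff i
      _ = (l : ℝ) * ∑ i ∈ Finset.range D, r' ^ i := by rw [Finset.mul_sum]
      _ ≤ (l : ℝ) * (1 - r')⁻¹ := by
          refine mul_le_mul_of_nonneg_left ?_ hl0.le
          have hne : r' ≠ 1 := hr1.ne
          have hp : (0:ℝ) < 1 - r' := by linarith
          rw [geom_sum_eq hne]
          have heq : (r' ^ D - 1) / (r' - 1) = (1 - r' ^ D) / (1 - r') := by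
            rw [← neg_div_neg_eq]; congr 1 <;> ring
          rw [heq]
          calc (1 - r' ^ D) / (1 - r') ≤ 1 / (1 - r') :=
                div_le_div₀ (by norm_num) (by nlinarith [pow_nonneg hr0.le D]) hp le_rfl
            _ = (1 - r')⁻¹ := one_div _
      _ = (l : ℝ) / (1 - r') := by rw [div_eq_mul_inv]
  -- the product over m-th roots of unity
  have hm_ineq : ∀ m : ℕ, 1 ≤ m →
      c ^ m * (R.map (fun α => Complex.abs (α ^ m - (r' : ℂ) ^ m))).prod
        ≤ ((l : ℝ) / (1 - r')) ^ m := by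
    intro m hm
    have hm0 : 0 < m := hm
    have hcard := card_nthRootsC m hm0
    have key : ∏ μ ∈ Polynomial.nthRootsFinset m (1 : ℂ), Complex.abs (Qc.eval ((r' : ℂ) * μ))
        = c ^ m * (R.map (fun α => Complex.abs (α ^ m - (r' : ℂ) ^ m))).prod := by
      calc ∏ μ ∈ Polynomial.nthRootsFinset m (1 : ℂ), Complex.abs (Qc.eval ((r' : ℂ) * μ))
          = ∏ μ ∈ Polynomial.nthRootsFinset m (1 : ℂ),
              (c * (R.map (fun α => Complex.abs ((r' : ℂ) * μ - α))).prod) :=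
            Finset.prod_congr rfl fun μ _ => heval _
        _ = c ^ m * ∏ μ ∈ Polynomial.nthRootsFinset m (1 : ℂ),
              (R.map (fun α => Complex.abs ((r' : ℂ) * μ - α))).prod := by
            rw [Finset.prod_mul_distrib, Finset.prod_const, hcard]
        _ = c ^ m * (R.map (fun α =>
              ∏ μ ∈ Polynomial.nthRootsFinset m (1 : ℂ), Complex.abs ((r' : ℂ) * μ - α))).prod := by
            rw [finset_prod_multiset_prod]
        _ = c ^ m * (R.map (fun α => Complex.abs (α ^ m - (r' : ℂ) ^ m))).prod := by
            congr 1
            exact congrArg Multiset.prod (Multiset.map_congr rfl fun α _ =>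
              abs_prod_scaled m hm0 r' hr0 α)
    rw [← key]
    calc ∏ μ ∈ Polynomial.nthRootsFinset m (1 : ℂ), Complex.abs (Qc.eval ((r' : ℂ) * μ))
        ≤ ∏ _μ ∈ Polynomial.nthRootsFinset m (1 : ℂ), ((l : ℝ) / (1 - r')) := by
          refine Finset.prod_le_prod (fun μ _ => by positivity) (fun μ hμ => ?_)
          refine hub _ ?_
          rw [map_mul, Complex.abs_ofReal, abs_of_mem_nthRoots hm0 hμ, mul_one,
            abs_of_pos hr0]
      _ = ((l : ℝ) / (1 - r')) ^ m := by rw [Finset.prod_const, hcard]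
  -- per-root lower bound data
  set u : ℂ → ℝ := fun α => max (Complex.abs α) r' with hu
  set e : ℂ → ℝ := fun α => |Complex.abs α - r'| with he
  have hu_pos : ∀ α, 0 < u α := fun α => lt_max_of_lt_right hr0
  have he_pos : ∀ α ∈ R, 0 < e α := by
    intro α hα
    exact abs_pos.2 (sub_ne_zero.2 (hmod α hα))
  have hroot_lb : ∀ m, 1 ≤ m → ∀ α ∈ R,
      u α ^ (m - 1) * e α ≤ Complex.abs (α ^ m - (r' : ℂ) ^ m) := by
    intro m hm α hα
    have habs : |Complex.abs (α ^ m) - Complex.abs ((r' : ℂ) ^ m)|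
        ≤ Complex.abs (α ^ m - (r' : ℂ) ^ m) :=
      Complex.abs.abs_abv_sub_le_abv_sub _ _
    rw [map_pow, map_pow, Complex.abs_ofReal, abs_of_pos hr0] at habs
    set b := Complex.abs α with hb
    have hb0 : 0 ≤ b := Complex.abs.nonneg α
    rcases (hmod α hα).lt_or_gt with h | h
    · replace h : b < r' := h
      have h1 : u α = r' := max_eq_right h.le
      have h2 : e α = r' - b := by
        show |Complex.abs α - r'| = r' - b
        rw [← hb, abs_of_neg (by linarith : b - r' < 0)]; ring
      have h3 : |b ^ m - r' ^ m| = r' ^ m - b ^ m := by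
        have := pow_le_pow_left₀ hb0 h.le m
        rw [abs_of_nonpos (by linarith)]; ring
      have h4 := pow_sub_pow_lb hb0 h.le hm
      rw [h1, h2]
      rw [h3] at habs
      linarith
    · replace h : r' < b := h
      have h1 : u α = b := max_eq_left h.le
      have h2 : e α = b - r' := by
        show |Complex.abs α - r'| = b - r'
        rw [← hb, abs_of_pos (by linarith : (0:ℝ) < b - r')]
      have h3 : |b ^ m - r' ^ m| = b ^ m - r' ^ m := by
        have := pow_le_pow_left₀ hr0.le h.le m
        rw [abs_of_nonneg (by linarith)]
      have h4 := pow_sub_pow_lb hr0.le h.le hm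
      rw [h1, h2]
      rw [h3] at habs
      linarith
  set T := c * (R.map u).prod with hT
  set C0 := c * (R.map e).prod with hC0
  set L := (l : ℝ) / (1 - r') with hL
  have hTpos : 0 < T := mul_pos hcpos (prod_map_pos _ _ fun α _ => hu_pos α)
  have hC0pos : 0 < C0 := mul_pos hcpos (prod_map_pos _ _ he_pos)
  have hTm : ∀ m, 1 ≤ m → T ^ (m - 1) * C0 ≤ L ^ m := by
    intro m hm
    have cpow : c ^ (m - 1) * c = c ^ m := by
      rw [← pow_succ, Nat.sub_add_cancel hm]
    have heq : T ^ (m - 1) * C0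
        = c ^ m * ((R.map (fun α => u α ^ (m - 1) * e α)).prod) := by
      rw [Multiset.prod_map_mul, Multiset.prod_map_pow, hT, hC0, mul_pow, ← cpow]; ring
    rw [heq]
    calc c ^ m * ((R.map (fun α => u α ^ (m - 1) * e α)).prod)
        ≤ c ^ m * ((R.map (fun α => Complex.abs (α ^ m - (r' : ℂ) ^ m))).prod) := by
          refine mul_le_mul_of_nonneg_left ?_ (pow_nonneg hcpos.le m)
          refine prod_map_le_prod_map _ _ _ (fun α hα => ?_) (fun α hα => hroot_lb m hm α hα)
          exact mul_nonneg (pow_nonneg (hu_pos α).le _) (he_pos α hα).le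
      _ ≤ L ^ m := hm_ineq m hm
  have hTL : T ≤ L := by
    by_contra hcon
    push_neg at hcon
    have hgt1 : 1 < T / L := (one_lt_div hLpos).2 hcon
    have hbound : ∀ m, 1 ≤ m → (T / L) ^ m ≤ T / C0 := by
      intro m hm
      rw [div_pow, div_le_div_iff₀ (pow_pos hLpos m) hC0pos]
      calc T ^ m * C0 = T * (T ^ (m - 1) * C0) := by
            conv_rhs => rw [← mul_assoc, ← pow_succ', Nat.sub_add_cancel hm]
        _ ≤ T * L ^ m := mul_le_mul_of_nonneg_left (hTm m hm) hTpos.le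
    have htend := tendsto_pow_atTop_atTop_of_one_lt hgt1
    obtain ⟨m, hm1, hm2⟩ :=
      ((htend.eventually_gt_atTop (T / C0)).and (eventually_ge_atTop 1)).exists
    exact absurd (hbound m hm2) (not_le.2 hm1)
  set N := Multiset.card (R.filter (fun z => Complex.abs z < a)) with hN
  set F := R.filter (fun z => Complex.abs z < a) with hF
  set G := R.filter (fun z => ¬ Complex.abs z < a) with hG
  have hFG : F + G = R := Multiset.filter_add_not _ R
  have hmemF : ∀ α ∈ F, Complex.abs α < a := fun α hα => (Multiset.mem_filter.1 hα).2
  have hFu : (F.map u).prod = r' ^ N := by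
    have hcongr : F.map u = F.map (fun _ => r') :=
      Multiset.map_congr rfl fun α hα =>
        max_eq_right (le_of_lt ((hmemF α hα).trans har))
    rw [hcongr, Multiset.map_const', Multiset.prod_replicate]
  have hFabs : (F.map (fun z => Complex.abs z)).prod ≤ a ^ N := by
    calc (F.map (fun z => Complex.abs z)).prod ≤ (F.map (fun _ => a)).prod :=
          prod_map_le_prod_map _ _ _ (fun α _ => Complex.abs.nonneg α)
            (fun α hα => (hmemF α hα).le)
      _ = a ^ N := by rw [Multiset.map_const', Multiset.prod_replicate]
  have hGabs : (G.map (fun z => Complex.abs z)).prod ≤ (G.map u).prod :=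
    prod_map_le_prod_map _ _ _ (fun α _ => Complex.abs.nonneg α)
      (fun α _ => le_max_left _ _)
  have hGu_nonneg : 0 ≤ (G.map u).prod :=
    prod_map_nonneg _ _ fun α _ => (hu_pos α).le
  have hGabs_nonneg : 0 ≤ (G.map (fun z => Complex.abs z)).prod :=
    prod_map_nonneg _ _ fun α _ => Complex.abs.nonneg α
  have h0eval : 1 ≤ c * (R.map (fun z => Complex.abs z)).prod := by
    have h0 : Complex.abs (Qc.eval 0) = c * (R.map (fun z => Complex.abs z)).prod := by
      rw [heval 0]
      congr 1
      exact congrArg Multiset.prod (Multiset.map_congr rfl fun α _ => by simp)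
    rw [← h0]
    have hev : Qc.eval 0 = ((Q.coeff 0 : ℤ) : ℂ) := by
      rw [← Polynomial.coeff_zero_eq_eval_zero, hQc, Polynomial.coeff_map]; rfl
    rw [hev, Complex.abs_intCast]
    exact_mod_cast Int.one_le_abs hQ0
  have hsplit_prod : (R.map (fun z => Complex.abs z)).prod
      = (F.map (fun z => Complex.abs z)).prod * (G.map (fun z => Complex.abs z)).prod := by
    rw [← hFG, Multiset.map_add, Multiset.prod_add]
  have hTsplit : T = c * (r' ^ N * (G.map u).prod) := by
    rw [hT, ← hFG, Multiset.map_add, Multiset.prod_add, hFu]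
  have hkey : 1 ≤ c * (a ^ N * (G.map u).prod) := by
    calc (1 : ℝ) ≤ c * ((F.map (fun z => Complex.abs z)).prod
          * (G.map (fun z => Complex.abs z)).prod) := by rw [← hsplit_prod]; exact h0eval
      _ ≤ c * (a ^ N * (G.map u).prod) := by
          refine mul_le_mul_of_nonneg_left ?_ hcpos.le
          exact mul_le_mul hFabs hGabs hGabs_nonneg (pow_nonneg ha.le N)
  have hfinal : (r' / a) ^ N ≤ T := by
    rw [div_pow, div_le_iff₀ (pow_pos ha N)]
    calc r' ^ N = r' ^ N * 1 := (mul_one _).symm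
      _ ≤ r' ^ N * (c * (a ^ N * (G.map u).prod)) :=
          mul_le_mul_of_nonneg_left hkey (pow_nonneg hr0.le N)
      _ = c * (r' ^ N * (G.map u).prod) * a ^ N := by ring
      _ = T * a ^ N := by rw [hTsplit]
  exact hfinal.trans hTL

lemma exists_strip : ∀ (n : ℕ) (P : Polynomial ℤ), P.natDegree ≤ n → P ≠ 0 →
    ∃ v Q, P = Polynomial.X ^ v * Q ∧ Q.coeff 0 ≠ 0 := by
  intro n
  induction n with
  | zero =>
      intro P hd hP
      refine ⟨0, P, by simp, fun h0 => hP ?_⟩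
      have hC := Polynomial.eq_C_of_natDegree_le_zero hd
      rw [hC] at h0 ⊢
      simp only [Polynomial.coeff_C_zero] at h0
      rw [h0]
      exact Polynomial.C_0
  | succ n ih =>
      intro P hd hP
      by_cases h0 : P.coeff 0 ≠ 0
      · exact ⟨0, P, by simp, h0⟩
      · push_neg at h0
        have hPX : P = Polynomial.X * P.divX := by
          conv_lhs => rw [← Polynomial.divX_mul_X_add P]
          rw [h0]
          simp [mul_comm]
        have hdvx : P.divX ≠ 0 := by
          intro h
          rw [h, mul_zero] at hPX
          exact hP hPX
        have hdeg : P.divX.natDegree ≤ n := by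
          have := Polynomial.natDegree_divX_eq_natDegree_tsub_one (p := P)
          omega
        obtain ⟨v, Q, hQ, hQ0⟩ := ih P.divX hdeg hdvx
        exact ⟨v + 1, Q, by rw [hPX, hQ]; ring, hQ0⟩

lemma count_bound (k l : ℕ) (hk : 1 ≤ k) (hl : 1 ≤ l) (Q : Polynomial ℤ)
    (hQ0 : Q.coeff 0 ≠ 0) (hcoeff : ∀ i, |Q.coeff i| ≤ (l : ℤ)) :
    ((Multiset.card ((Q.map (Int.castRingHom ℂ)).roots.filter
        (fun z => Complex.abs z < aFun k)) : ℕ) : ℝ)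
      ≤ (k : ℝ) * (1 + Real.log l / Real.log ((k : ℝ) + 1)) := by
  classical
  have hk0 : (0:ℝ) < (k : ℝ) := by exact_mod_cast hk
  have hk1 : (0:ℝ) < (k : ℝ) + 1 := by linarith
  have hl0 : (0:ℝ) < (l : ℝ) := by exact_mod_cast hl
  set a := aFun k with haf
  set r := (k : ℝ) / ((k : ℝ) + 1) with hrdef
  have ha : 0 < a := by
    rw [haf]
    exact mul_pos (div_pos hk0 hk1) (Real.rpow_pos_of_pos hk1 _)
  have hr0 : 0 < r := div_pos hk0 hk1
  have hr1 : r < 1 := (div_lt_one hk1).2 (by linarith)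
  have har : a < r := by
    have h1 : ((k:ℝ) + 1) ^ (-(1:ℝ)/k) < 1 :=
      Real.rpow_lt_one_of_one_lt_of_neg (by linarith)
        (div_neg_of_neg_of_pos (by norm_num) hk0)
    calc a = r * (((k:ℝ) + 1) ^ (-(1:ℝ)/k)) := by rw [haf]; rfl
      _ < r * 1 := by exact mul_lt_mul_of_pos_left h1 hr0
      _ = r := mul_one r
  set N := Multiset.card ((Q.map (Int.castRingHom ℂ)).roots.filter
      (fun z => Complex.abs z < a)) with hNdef
  have main : (r / a) ^ N ≤ (l : ℝ) / (1 - r) := by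
    have hev : ∀ᶠ r' in nhdsWithin r (Set.Ioi r),
        (r' / a) ^ N ≤ (l : ℝ) / (1 - r') := by
      set S : Finset ℝ :=
        ((Q.map (Int.castRingHom ℂ)).roots.map (fun z => Complex.abs z)).toFinset with hS
      have h1 : Set.Ioo r 1 ∈ nhdsWithin r (Set.Ioi r) :=
        Ioo_mem_nhdsGT_of_mem ⟨le_refl r, hr1⟩
      have h2 : ∀ s ∈ S, ∀ᶠ r' in nhdsWithin r (Set.Ioi r), s ≠ r' := by
        intro s hs
        rcases le_or_gt s r with h | h
        · filter_upwards [self_mem_nhdsWithin] with x hx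
          intro he
          rw [he] at h
          simp only [Set.mem_Ioi] at hx
          linarith
        · filter_upwards [Ioo_mem_nhdsGT_of_mem ⟨le_refl r, h⟩] with x hx
          intro he
          exact absurd hx.2 (by rw [he]; exact lt_irrefl x)
      have h3 : ∀ᶠ r' in nhdsWithin r (Set.Ioi r), ∀ s ∈ S, s ≠ r' :=
        (Filter.eventually_all_finset S).2 h2
      filter_upwards [h1, h3] with r' hr' hS'
      refine key_radius l hl Q hQ0 hcoeff ha (har.trans hr'.1) hr'.2 ?_
      intro α hα
      exact hS' (Complex.abs α)
        (Multiset.mem_toFinset.2 (Multiset.mem_map_of_mem _ hα))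
    have ht1 : Filter.Tendsto (fun r' : ℝ => (r' / a) ^ N)
        (nhdsWithin r (Set.Ioi r)) (nhds ((r / a) ^ N)) := by
      refine Filter.Tendsto.mono_left ?_ nhdsWithin_le_nhds
      exact ((continuous_id.div_const a).pow N).continuousAt
    have ht2 : Filter.Tendsto (fun r' : ℝ => (l : ℝ) / (1 - r'))
        (nhdsWithin r (Set.Ioi r)) (nhds ((l : ℝ) / (1 - r))) := by
      refine Filter.Tendsto.mono_left ?_ nhdsWithin_le_nhds
      refine continuousAt_const.div ((continuous_const.sub continuous_id).continuousAt) ?_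
      intro h
      have : r = 1 := by
        have := sub_eq_zero.1 h
        linarith [this]
      linarith
    exact le_of_tendsto_of_tendsto ht1 ht2 hev
  have hra : r / a = ((k : ℝ) + 1) ^ ((1:ℝ)/k) := by
    rw [haf]
    unfold aFun
    rw [← hrdef, neg_div, Real.rpow_neg hk1.le]
    rw [div_eq_mul_inv, mul_inv, inv_inv, ← mul_assoc]
    rw [mul_inv_cancel₀ hr0.ne', one_mul]
  have hLpos : 0 < Real.log ((k:ℝ) + 1) := Real.log_pos (by linarith)
  have h2 : (l : ℝ) / (1 - r) = l * ((k : ℝ) + 1) := by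
    rw [hrdef]
    have hq : 1 - (k:ℝ) / ((k:ℝ)+1) = 1 / ((k:ℝ)+1) := by field_simp; ring
    rw [hq]
    rw [div_div_eq_mul_div, div_one]
  have h1 := Real.log_le_log (by positivity) main
  rw [Real.log_pow, hra, Real.log_rpow hk1, h2,
    Real.log_mul hl0.ne' (by linarith)] at h1
  set L := Real.log ((k:ℝ) + 1) with hLdef
  calc ((N : ℕ) : ℝ) = ((N : ℝ) * ((1:ℝ)/k * L)) * ((k : ℝ) / L) := by
        field_simp
    _ ≤ (Real.log l + L) * ((k : ℝ) / L) :=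
        mul_le_mul_of_nonneg_right h1 (by positivity)
    _ = (k : ℝ) * (1 + Real.log l / L) := by
        field_simp
        ring


lemma part1 : ∀ k : ℕ, 1 ≤ k → aFun k ∈ Set.Ioo (0 : ℝ) 1 := by
  intro k hk
  have hk0 : (0 : ℝ) < (k : ℝ) := by exact_mod_cast hk
  have hk1 : (0 : ℝ) < (k : ℝ) + 1 := by linarith
  constructor
  · exact mul_pos (div_pos hk0 hk1) (Real.rpow_pos_of_pos hk1 _)
  · have h1 : ((k : ℝ) + 1) ^ (-(1 : ℝ) / k) ≤ 1 :=
      Real.rpow_le_one_of_one_le_of_nonpos (by linarith)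
        (div_nonpos_of_nonpos_of_nonneg (by norm_num) hk0.le)
    have h2 : (k : ℝ) / ((k : ℝ) + 1) < 1 := (div_lt_one hk1).2 (by linarith)
    calc aFun k ≤ (k : ℝ) / ((k : ℝ) + 1) * 1 := by
          unfold aFun
          exact mul_le_mul_of_nonneg_left h1 (div_nonneg hk0.le hk1.le)
      _ < 1 := by rwa [mul_one]

lemma part2 : Filter.Tendsto aFun Filter.atTop (nhds 1) := by
  have h1 : Tendsto (fun k : ℕ => (k : ℝ) / ((k : ℝ) + 1)) atTop (nhds 1) :=
    tendsto_natCast_div_add_atTop (1 : ℝ)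
  have hlog : Tendsto (fun x : ℝ => Real.log x / x) atTop (nhds 0) :=
    Real.isLittleO_log_id_atTop.tendsto_div_nhds_zero
  have hcomp : Tendsto (fun k : ℕ => Real.log ((k : ℝ) + 1) / ((k : ℝ) + 1)) atTop (nhds 0) :=
    hlog.comp (tendsto_atTop_add_const_right _ 1 tendsto_natCast_atTop_atTop)
  have hrat : Tendsto (fun k : ℕ => ((k : ℝ) + 1) / (k : ℝ)) atTop (nhds 1) := by
    have : Tendsto (fun k : ℕ => 1 + 1 / (k : ℝ)) atTop (nhds 1) := by
      have h := (tendsto_const_nhds (x := (1:ℝ)) (f := (atTop : Filter ℕ))).add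
        tendsto_one_div_atTop_nhds_zero_nat
      simpa using h
    refine this.congr' ?_
    filter_upwards [eventually_ne_atTop 0] with k hk
    field_simp
  have h2 : Tendsto (fun k : ℕ => Real.log ((k : ℝ) + 1) / (k : ℝ)) atTop (nhds 0) := by
    have := hcomp.mul hrat
    rw [zero_mul] at this
    refine this.congr' ?_
    filter_upwards [eventually_ne_atTop 0] with k hk
    have hkr : (k : ℝ) ≠ 0 := Nat.cast_ne_zero.2 hk
    field_simp
  have h3 : Tendsto (fun k : ℕ => ((k : ℝ) + 1) ^ (-(1 : ℝ) / k)) atTop (nhds 1) := by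
    have hexp : Tendsto (fun k : ℕ => Real.exp (-(Real.log ((k : ℝ) + 1) / k))) atTop (nhds 1) := by
      have hneg : Tendsto (fun k : ℕ => -(Real.log ((k : ℝ) + 1) / k)) atTop (nhds 0) := by
        simpa using h2.neg
      have h := (Real.continuous_exp.tendsto 0).comp hneg
      simpa [Function.comp_def] using h
    refine hexp.congr' ?_
    filter_upwards [eventually_ge_atTop 1] with k hk
    have hk1 : (0 : ℝ) < (k : ℝ) + 1 := by positivity
    rw [Real.rpow_def_of_pos hk1]
    ring_nf
  have := h1.mul h3
  rw [one_mul] at this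
  exact this



theorem stmt1 :
    (∀ k : ℕ, 1 ≤ k → aFun k ∈ Set.Ioo (0 : ℝ) 1) ∧
    Filter.Tendsto aFun Filter.atTop (nhds 1) ∧
    ∀ k : ℕ, 1 ≤ k → ∀ l n : ℕ, 1 ≤ l → 1 ≤ n → ∀ P : Polynomial ℤ, P ≠ 0 →
      P.natDegree < n → (∀ i, |P.coeff i| ≤ (l : ℤ)) →
      (((((P.map (Int.castRingHom ℂ)).roots.filter
            (fun z => z ≠ 0 ∧ Complex.abs z < aFun k)).card : ℕ) : ℝ)
          ≤ (k : ℝ) * (1 + Real.log l / Real.log ((k : ℝ) + 1))) := by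
  refine ⟨part1, part2, ?_⟩
  intro k hk l n hl hn P hP hdeg hcoeff
  obtain ⟨v, Q, hPQ, hQ0⟩ := exists_strip P.natDegree P le_rfl hP
  have hQne : Q ≠ 0 := fun h => hP (by rw [hPQ, h, mul_zero])
  have hQcoeff : ∀ i, |Q.coeff i| ≤ (l : ℤ) := by
    intro i
    have h := hcoeff (i + v)
    rwa [hPQ, Polynomial.coeff_X_pow_mul] at h
  have hQcne : Q.map (Int.castRingHom ℂ) ≠ 0 :=
    (Polynomial.map_ne_zero_iff (Int.cast_injective (α := ℂ))).2 hQne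
  have hmap : P.map (Int.castRingHom ℂ)
      = Polynomial.X ^ v * Q.map (Int.castRingHom ℂ) := by
    rw [hPQ, Polynomial.map_mul, Polynomial.map_pow, Polynomial.map_X]
  have hXpow : (Polynomial.X ^ v : Polynomial ℂ) ≠ 0 := pow_ne_zero v Polynomial.X_ne_zero
  have hroots : (P.map (Int.castRingHom ℂ)).roots
      = v • ({0} : Multiset ℂ) + (Q.map (Int.castRingHom ℂ)).roots := by
    rw [hmap, Polynomial.roots_mul (mul_ne_zero hXpow hQcne), Polynomial.roots_X_pow]
  have hnz : ∀ z ∈ (Q.map (Int.castRingHom ℂ)).roots, z ≠ 0 := by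
    intro z hz h0
    have hroot := (Polynomial.mem_roots'.1 hz).2
    rw [h0] at hroot
    have hc0 : (Q.map (Int.castRingHom ℂ)).coeff 0 ≠ 0 := by
      rw [Polynomial.coeff_map]
      simpa using (Int.cast_ne_zero (α := ℂ)).2 hQ0
    exact hc0 (by rwa [Polynomial.coeff_zero_eq_eval_zero])
  have hfilter : ((P.map (Int.castRingHom ℂ)).roots.filter
        (fun z => z ≠ 0 ∧ Complex.abs z < aFun k))
      = (Q.map (Int.castRingHom ℂ)).roots.filter (fun z => Complex.abs z < aFun k) := by
    rw [hroots, Multiset.filter_add]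
    have hzero : Multiset.filter (fun z => z ≠ 0 ∧ Complex.abs z < aFun k)
        (v • ({0} : Multiset ℂ)) = 0 := by
      rw [Multiset.nsmul_singleton]
      refine Multiset.filter_eq_nil.2 fun z hz hcond => ?_
      exact hcond.1 (Multiset.eq_of_mem_replicate hz)
    rw [hzero, zero_add]
    refine Multiset.filter_congr fun z hz => ?_
    exact and_iff_right (hnz z hz)
  rw [hfilter]
  exact count_bound k l hk hl Q hQ0 hQcoeff

end StmtAux

/-- `a k ∈ (0,1)`, `a k → 1`, and a nonzero integer polynomial of degree `< n` with
coefficients bounded by `l` has at most `k(1 + log l / log (k+1))` nonzero roots (with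
multiplicity) of absolute value less than `a k`. -/
theorem stmt1 :
    (∀ k : ℕ, 1 ≤ k → aFun k ∈ Set.Ioo (0 : ℝ) 1) ∧
    Filter.Tendsto aFun Filter.atTop (nhds 1) ∧
    ∀ k : ℕ, 1 ≤ k → ∀ l n : ℕ, 1 ≤ l → 1 ≤ n → ∀ P : Polynomial ℤ, P ≠ 0 →
      P.natDegree < n → (∀ i, |P.coeff i| ≤ (l : ℤ)) →
      (((((P.map (Int.castRingHom ℂ)).roots.filter
            (fun z => z ≠ 0 ∧ ‖z‖ < aFun k)).card : ℕ) : ℝ)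
          ≤ (k : ℝ) * (1 + Real.log l / Real.log ((k : ℝ) + 1))) := by
  exact StmtAux.stmt1
end

section
/- For every ε ∈ (0,1) there exists c = c(ε) ∈ (0,1) such that: for all n ≥ 1, l ≥ 3, every nonzero P ∈ ℤ[X] of degree < n with coefficients bounded by l, every 0 < r < ε^n 2^{-n}, and every λ ∈ ℂ with ε ≤ |λ| ≤ 1-ε and |P(λ)| ≤ r, there exists η ∈ ℂ with P(η) = 0 and |λ - η| ≤ (2^n ε^{-n} r)^{c/log l}. -/
open Polynomial

private lemma mprod_ge (s : Multiset ℝ) (a : ℝ) (ha : 0 ≤ a)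
    (h : ∀ x ∈ s, a ≤ x) : a ^ Multiset.card s ≤ s.prod := by
  induction s using Multiset.induction with
  | empty => simp
  | cons x s ih =>
    have hx := h x (Multiset.mem_cons_self x s)
    have hs : a ^ Multiset.card s ≤ s.prod :=
      ih fun y hy => h y (Multiset.mem_cons_of_mem hy)
    have h0 : (0:ℝ) ≤ a ^ Multiset.card s := pow_nonneg ha _
    simp only [Multiset.card_cons, Multiset.prod_cons, pow_succ]
    calc a ^ Multiset.card s * a ≤ s.prod * x := mul_le_mul hs hx ha (h0.trans hs)
    _ = x * s.prod := mul_comm _ _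

private lemma mprod_le (s : Multiset ℝ) (a : ℝ)
    (h0 : ∀ x ∈ s, 0 ≤ x) (h : ∀ x ∈ s, x ≤ a) : s.prod ≤ a ^ Multiset.card s := by
  induction s using Multiset.induction with
  | empty => simp
  | cons x s ih =>
    have hx0 := h0 x (Multiset.mem_cons_self x s)
    have hxa := h x (Multiset.mem_cons_self x s)
    have ihs := ih (fun y hy => h0 y (Multiset.mem_cons_of_mem hy))
      (fun y hy => h y (Multiset.mem_cons_of_mem hy))
    have hsp : (0:ℝ) ≤ s.prod :=
      Multiset.prod_nonneg (fun y hy => h0 y (Multiset.mem_cons_of_mem hy))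
    simp only [Multiset.card_cons, Multiset.prod_cons, pow_succ]
    calc x * s.prod ≤ a * a ^ Multiset.card s := mul_le_mul hxa ihs hsp (hx0.trans hxa)
    _ = a ^ Multiset.card s * a := mul_comm _ _

private lemma norm_mprod (s : Multiset ℂ) : ‖s.prod‖ = (s.map norm).prod :=
  map_multiset_prod (normHom (α := ℂ)) s

private lemma abs_eval_prod (U : Multiset ℂ) (w : ℂ) :
    ‖((U.map fun a => X - C a).prod).eval w‖
      = (U.map fun a => ‖w - a‖).prod := by
  rw [eval_multiset_prod, Multiset.map_map, norm_mprod, Multiset.map_map]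
  congr 1
  apply Multiset.map_congr rfl
  intro a _
  simp [Function.comp]

private lemma maxmod (h : Polynomial ℂ) (R M : ℝ) (hR : 0 < R)
    (hb : ∀ w : ℂ, ‖w‖ = R → ‖h.eval w‖ ≤ M) :
    ‖h.eval 0‖ ≤ M := by
  have hd : DiffContOnCl ℂ (fun z => h.eval z) (Metric.ball (0:ℂ) R) :=
    (h.differentiable).diffContOnCl
  have hz : (0:ℂ) ∈ closure (Metric.ball (0:ℂ) R) := by
    rw [closure_ball (0:ℂ) (ne_of_gt hR)]
    exact Metric.mem_closedBall_self hR.le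
  have := Complex.norm_le_of_forall_mem_frontier_norm_le
    (Metric.isBounded_ball) hd (C := M) ?_ hz
  · simpa using this
  · intro z hzf
    rw [frontier_ball (0:ℂ) (ne_of_gt hR)] at hzf
    have : ‖z‖ = R := by
      simpa [Complex.dist_eq] using hzf
    simpa using hb z this

private lemma jensen (g : Polynomial ℂ) (S : Multiset ℂ) (hS : S ≤ g.roots) (R M : ℝ)
    (hR : 0 < R) (hM : ∀ w : ℂ, ‖w‖ = R → ‖g.eval w‖ ≤ M) :
    ‖g.eval 0‖ * R ^ Multiset.card S ≤ M * (S.map norm).prod := by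
  have hM0 : 0 ≤ M := by
    refine le_trans (norm_nonneg _) (hM (R:ℂ) ?_)
    simp [Complex.norm_real, abs_of_pos hR]
  by_cases hg : g = 0
  · have hS0 : S = 0 := by
      rw [hg, roots_zero] at hS
      exact Multiset.le_zero.mp hS
    simp [hg, hS0, hM0]
  set T := g.roots - S with hT
  have hroots : g.roots = T + S := by
    rw [hT, tsub_add_cancel_of_le hS]
  set k := Multiset.card S with hk
  have hsplit : g = C g.leadingCoeff * (g.roots.map fun a => X - C a).prod :=
    (IsAlgClosed.splits g).eq_prod_roots
  set h : Polynomial ℂ := C g.leadingCoeff * (T.map fun a => X - C a).prod *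
      (S.map fun s => C ((R:ℂ)^2) - C ((starRingEnd ℂ) s) * X).prod with hh
  -- evaluation formulas
  have evg : ∀ w : ℂ, ‖g.eval w‖
      = ‖g.leadingCoeff‖ * (T.map fun a => ‖w - a‖).prod
        * (S.map fun s => ‖w - s‖).prod := by
    intro w
    conv_lhs => rw [hsplit]
    rw [hroots, Multiset.map_add, Multiset.prod_add, eval_mul, eval_mul, norm_mul, norm_mul,
      abs_eval_prod, abs_eval_prod, eval_C]
    ring
  have evh : ∀ w : ℂ, ‖h.eval w‖
      = ‖g.leadingCoeff‖ * (T.map fun a => ‖w - a‖).prod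
        * (S.map fun s => ‖(R:ℂ)^2 - (starRingEnd ℂ) s * w‖).prod := by
    intro w
    rw [hh, eval_mul, eval_mul, norm_mul, norm_mul, abs_eval_prod, eval_C,
      eval_multiset_prod, Multiset.map_map, norm_mprod, Multiset.map_map]
    congr 2
    apply Multiset.map_congr rfl
    intro s _
    simp [Function.comp]
  -- on the circle
  have circ : ∀ (w s : ℂ), ‖w‖ = R →
      ‖(R:ℂ)^2 - (starRingEnd ℂ) s * w‖ = R * ‖w - s‖ := by
    intro w s hw
    have h1 : ((R:ℂ)^2) = (starRingEnd ℂ) w * w := by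
      rw [mul_comm, Complex.mul_conj]
      rw [Complex.normSq_eq_norm_sq, hw]
      push_cast
      ring
    rw [h1]
    have : (starRingEnd ℂ) w * w - (starRingEnd ℂ) s * w = (starRingEnd ℂ) (w - s) * w := by
      rw [map_sub]; ring
    rw [this, norm_mul, Complex.norm_conj, hw, mul_comm]
  have hcirc : ∀ w : ℂ, ‖w‖ = R → ‖h.eval w‖ ≤ R ^ k * M := by
    intro w hw
    rw [evh w]
    have : (S.map fun s => ‖(R:ℂ)^2 - (starRingEnd ℂ) s * w‖).prod
        = R ^ k * (S.map fun s => ‖w - s‖).prod := by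
      have : (S.map fun s => ‖(R:ℂ)^2 - (starRingEnd ℂ) s * w‖)
          = S.map fun s => R * ‖w - s‖ := by
        apply Multiset.map_congr rfl
        intro s _
        exact circ w s hw
      rw [this, Multiset.prod_map_mul]
      congr 1
      simp [Multiset.map_const', Multiset.prod_replicate, hk]
    rw [this]
    have hMw := hM w hw
    rw [evg w] at hMw
    have hRk : (0:ℝ) ≤ R ^ k := pow_nonneg hR.le _
    calc ‖g.leadingCoeff‖ * (T.map fun a => ‖w - a‖).prod *
          (R ^ k * (S.map fun s => ‖w - s‖).prod)
        = R ^ k * (‖g.leadingCoeff‖ * (T.map fun a => ‖w - a‖).prod *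
          (S.map fun s => ‖w - s‖).prod) := by ring
      _ ≤ R ^ k * M := mul_le_mul_of_nonneg_left hMw hRk
  have hmax : ‖h.eval 0‖ ≤ R ^ k * M := maxmod h R _ hR hcirc
  -- values at 0
  have habs0 : ∀ s : ℂ, ‖(0:ℂ) - s‖ = ‖s‖ := by
    intro s; rw [zero_sub, norm_neg]
  set LT : ℝ := ‖g.leadingCoeff‖ * (T.map fun a => ‖0 - a‖).prod with hLT
  have hLT0 : 0 ≤ LT := by
    apply mul_nonneg (norm_nonneg _)
    exact Multiset.prod_nonneg (by
      intro x hx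
      obtain ⟨a, _, rfl⟩ := Multiset.mem_map.mp hx
      exact norm_nonneg _)
  have hg0 : ‖g.eval 0‖ = LT * (S.map norm).prod := by
    rw [evg 0, hLT]
    congr 2
    apply Multiset.map_congr rfl
    intro s _
    exact habs0 s
  have hh0 : ‖h.eval 0‖ = LT * (R ^ k * R ^ k) := by
    rw [evh 0, hLT]
    have : (S.map fun s => ‖(R:ℂ)^2 - (starRingEnd ℂ) s * 0‖).prod
        = (R ^ k) * R ^ k := by
      have h2 : (S.map fun s => ‖(R:ℂ)^2 - (starRingEnd ℂ) s * 0‖)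
          = S.map (fun _ => R ^ 2) := by
        apply Multiset.map_congr rfl
        intro s _
        simp [Complex.norm_real, abs_of_pos hR, ← Complex.ofReal_pow, sq_abs,
          abs_of_pos (pow_pos hR 2)]
      rw [h2, Multiset.map_const', Multiset.prod_replicate, ← hk, ← pow_mul, two_mul, pow_add]
    rw [this, mul_assoc]
  -- conclude
  have hPS : 0 ≤ (S.map norm).prod :=
    Multiset.prod_nonneg (by
      intro x hx
      obtain ⟨a, _, rfl⟩ := Multiset.mem_map.mp hx
      exact norm_nonneg _)
  have hRk : (0:ℝ) < R ^ k := pow_pos hR _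
  rw [hg0]
  -- LT * PS * R^k ≤ M * PS  from LT * (R^k * R^k) ≤ R^k * M
  have hLTM : LT * R ^ k ≤ M := by
    rw [hh0] at hmax
    nlinarith [hmax, hRk]
  calc LT * (S.map norm).prod * R ^ k
      = (LT * R ^ k) * (S.map norm).prod := by ring
    _ ≤ M * (S.map norm).prod := mul_le_mul_of_nonneg_right hLTM hPS


private lemma geom_bound (R : ℝ) (h0 : 0 ≤ R) (h1 : R < 1) (N : ℕ) :
    ∑ i ∈ Finset.range N, R ^ i ≤ (1 - R)⁻¹ := by
  have hgs := geom_sum_mul R N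
  have hRN : (0:ℝ) ≤ R ^ N := pow_nonneg h0 N
  rw [inv_eq_one_div, le_div_iff₀ (by linarith)]
  nlinarith [hgs]

set_option maxHeartbeats 1000000 in
/-- A nonzero integer polynomial of degree `< n` with coefficients bounded by `l ≥ 3`
which is small at a point `λ` with `ε ≤ |λ| ≤ 1-ε` has a root near `λ`. -/
theorem stmt2 (ε : ℝ) (hε : ε ∈ Set.Ioo (0 : ℝ) 1) :
    ∃ c ∈ Set.Ioo (0 : ℝ) 1, ∀ n l : ℕ, 1 ≤ n → 3 ≤ l →
      ∀ P : Polynomial ℤ, P ≠ 0 → P.natDegree < n → (∀ i, |P.coeff i| ≤ (l : ℤ)) →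
      ∀ r : ℝ, 0 < r → r < ε ^ n * (2 : ℝ) ^ (-(n : ℝ)) →
      ∀ lam : ℂ, ε ≤ ‖lam‖ → ‖lam‖ ≤ 1 - ε →
      ‖aeval lam P‖ ≤ r →
      ∃ η : ℂ, aeval η P = 0 ∧
        ‖lam - η‖ ≤ ((2 : ℝ) ^ (n : ℝ) * ε ^ (-(n : ℝ)) * r) ^ (c / Real.log l) := by
  classical
  obtain ⟨hε0, hε1⟩ := hε
  have h3 : (0:ℝ) < Real.log 3 := Real.log_pos (by norm_num)
  have hhalf0 : (0:ℝ) < 1 - ε/2 := by linarith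
  have hq0 : (0:ℝ) < 1 - ε/4 := by linarith
  set τ : ℝ := Real.log (1 - ε/4) - Real.log (1 - ε/2) with hτdef
  have hτ : 0 < τ := sub_pos.2 (Real.log_lt_log hhalf0 (by linarith))
  set G : ℝ := Real.log (4/ε) with hGdef
  have hG : 0 < G := Real.log_pos (by rw [lt_div_iff₀ hε0]; linarith)
  set A : ℝ := Real.log 3 + G with hAdef
  have hA0 : 0 < A := by positivity
  set c : ℝ := min (1/2 : ℝ) (τ * Real.log 3 / (2 * A)) with hcdef
  have hc0 : 0 < c := lt_min (by norm_num) (by positivity)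
  have hc1 : c < 1 := lt_of_le_of_lt (min_le_left _ _) (by norm_num)
  refine ⟨c, ⟨hc0, hc1⟩, ?_⟩
  intro n l hn hl P hP hdeg hcoeff r hr0 hrlt lam hlam1 hlam2 hPlam
  by_contra hcon
  push_neg at hcon
  -- basic quantities
  have hl3 : (3:ℝ) ≤ (l:ℝ) := by exact_mod_cast hl
  have hl0 : (0:ℝ) < l := by linarith
  set L : ℝ := Real.log l with hLdef
  have hL3 : Real.log 3 ≤ L := (Real.log_le_log_iff (by norm_num) hl0).2 hl3
  have hL0 : 0 < L := lt_of_lt_of_le h3 hL3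
  set B : ℝ := (2:ℝ)^(n:ℝ) * ε^(-(n:ℝ)) * r with hBdef
  have hBeq : B = 2^n * (ε^n)⁻¹ * r := by
    rw [hBdef, Real.rpow_natCast, Real.rpow_neg hε0.le, Real.rpow_natCast]
  have hεn : (0:ℝ) < ε^n := pow_pos hε0 n
  have h2n : (0:ℝ) < 2^n := by positivity
  have hB0 : 0 < B := by rw [hBeq]; positivity
  have hr2 : r * 2^n < ε^n := by
    have h2 : (2:ℝ)^(-(n:ℝ)) = ((2:ℝ)^n)⁻¹ := by
      rw [Real.rpow_neg (by norm_num), Real.rpow_natCast]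
    rw [h2] at hrlt
    calc r * 2^n < ε^n * (2^n)⁻¹ * 2^n := mul_lt_mul_of_pos_right hrlt h2n
    _ = ε^n := by field_simp
  have hB1 : B < 1 := by
    rw [hBeq, show (2:ℝ)^n * (ε^n)⁻¹ * r = (r * 2^n) / ε^n by ring]
    exact (div_lt_one hεn).2 hr2
  set D : ℝ := B ^ (c / L) with hDdef
  have hD0 : (0:ℝ) ≤ D := Real.rpow_nonneg hB0.le _
  -- the complex polynomial and its roots
  set Pc : Polynomial ℂ := P.map (algebraMap ℤ ℂ) with hPc
  have hPc0 : Pc ≠ 0 := (Polynomial.map_ne_zero_iff (algebraMap ℤ ℂ).injective_int).2 hP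
  have haev : ∀ z : ℂ, aeval z P = Pc.eval z := by
    intro z; rw [hPc, eval_map, aeval_def]
  set pred : ℂ → Prop := fun z => ‖lam - z‖ < ε / 2 with hpred
  set S : Multiset ℂ := Pc.roots.filter pred with hSdef
  set k : ℕ := Multiset.card S with hk
  have hzro : ∀ z ∈ Pc.roots, D < ‖lam - z‖ := by
    intro z hz
    have hzr : Pc.eval z = 0 := isRoot_of_mem_roots hz
    have : aeval z P = 0 := by rw [haev z]; exact hzr
    exact hcon z this
  -- Step I : product bound gives D ^ k ≤ B
  have hsplitP : Pc = C Pc.leadingCoeff * (Pc.roots.map fun a => X - C a).prod :=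
    (IsAlgClosed.splits Pc).eq_prod_roots
  have hevP : ‖Pc.eval lam‖
      = ‖Pc.leadingCoeff‖ * (Pc.roots.map fun a => ‖lam - a‖).prod := by
    conv_lhs => rw [hsplitP]
    rw [eval_mul, norm_mul, abs_eval_prod, eval_C]
  have hlead : 1 ≤ ‖Pc.leadingCoeff‖ := by
    rw [hPc, Polynomial.leadingCoeff_map_of_injective (algebraMap ℤ ℂ).injective_int]
    have h0 : P.leadingCoeff ≠ 0 := leadingCoeff_ne_zero.2 hP
    have := Int.one_le_abs h0
    rw [show (algebraMap ℤ ℂ) P.leadingCoeff = ((P.leadingCoeff : ℤ) : ℂ) by rfl,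
      Complex.norm_intCast]
    exact_mod_cast this
  have hfilt : Pc.roots.filter pred + Pc.roots.filter (fun z => ¬ pred z) = Pc.roots :=
    Multiset.filter_add_not _ _
  have h1 : D ^ k ≤ (S.map fun a => ‖lam - a‖).prod := by
    have := mprod_ge (S.map fun a => ‖lam - a‖) D hD0 (by
      intro x hx
      obtain ⟨z, hzS, rfl⟩ := Multiset.mem_map.mp hx
      exact (hzro z (Multiset.mem_of_mem_filter hzS)).le)
    rwa [Multiset.card_map, ← hk] at this
  have hNcard : Multiset.card (Pc.roots.filter fun z => ¬ pred z) ≤ n := by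
    refine le_trans (Multiset.card_le_card (Multiset.filter_le _ _)) ?_
    refine le_trans (card_roots' Pc) ?_
    exact le_trans natDegree_map_le hdeg.le
  have h2 : (ε/2)^n
      ≤ ((Pc.roots.filter fun z => ¬ pred z).map fun a => ‖lam - a‖).prod := by
    have hge := mprod_ge ((Pc.roots.filter fun z => ¬ pred z).map fun a => ‖lam - a‖)
      (ε/2) (by positivity) (by
        intro x hx
        obtain ⟨z, hzf, rfl⟩ := Multiset.mem_map.mp hx
        have := (Multiset.mem_filter.mp hzf).2
        exact not_lt.mp this)
    rw [Multiset.card_map] at hge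
    exact le_trans (pow_le_pow_of_le_one (by positivity) (by linarith) hNcard) hge
  have hprS0 : (0:ℝ) ≤ (S.map fun a => ‖lam - a‖).prod :=
    le_trans (pow_nonneg hD0 k) h1
  have hkey : D ^ k * (ε/2)^n ≤ r := by
    have hpr0 : (0:ℝ) ≤ (Pc.roots.map fun a => ‖lam - a‖).prod := by
      apply Multiset.prod_nonneg
      intro x hx
      obtain ⟨z, _, rfl⟩ := Multiset.mem_map.mp hx
      exact norm_nonneg _
    calc D ^ k * (ε/2)^n
        ≤ (S.map fun a => ‖lam - a‖).prod *
          ((Pc.roots.filter fun z => ¬ pred z).map fun a => ‖lam - a‖).prod :=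
          mul_le_mul h1 h2 (by positivity) hprS0
      _ = (Pc.roots.map fun a => ‖lam - a‖).prod := by
          conv_rhs => rw [← hfilt]
          rw [Multiset.map_add, Multiset.prod_add, hSdef]
      _ ≤ ‖Pc.leadingCoeff‖ * (Pc.roots.map fun a => ‖lam - a‖).prod :=
          le_mul_of_one_le_left hpr0 hlead
      _ = ‖Pc.eval lam‖ := hevP.symm
      _ = ‖aeval lam P‖ := by rw [haev lam]
      _ ≤ r := hPlam
  have hDkB : D ^ k ≤ B := by
    have hp : (0:ℝ) < (ε/2)^n := by positivity
    rw [hBeq]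
    have : D ^ k ≤ r / (ε/2)^n := by
      rw [le_div_iff₀ hp]; exact hkey
    calc D ^ k ≤ r / (ε/2)^n := this
      _ = 2^n * (ε^n)⁻¹ * r := by
          rw [div_pow]
          field_simp
  have hDk : D ^ k = B ^ (c/L * k) := by
    rw [hDdef, ← Real.rpow_natCast (B ^ (c/L)) k, ← Real.rpow_mul hB0.le]
  have hk1 : (1:ℝ) ≤ c / L * k := by
    have hle : B ^ (c/L * (k:ℝ)) ≤ B ^ (1:ℝ) := by
      rw [Real.rpow_one, ← hDk]; exact hDkB
    exact (Real.rpow_le_rpow_left_iff_of_base_lt_one hB0 hB1).mp hle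
  have hLck : L ≤ c * k := by
    have := mul_le_mul_of_nonneg_left hk1 hL0.le
    rw [mul_one] at this
    calc L ≤ L * (c / L * k) := this
      _ = c * k := by field_simp
  -- Step II : root counting via Jensen
  set m : ℕ := rootMultiplicity 0 P with hm
  have hsplit0 : ∃ Q0 : Polynomial ℤ, X ^ m * Q0 = P ∧ Q0.eval 0 ≠ 0 := by
    refine ⟨P /ₘ (X - C 0) ^ m, ?_, ?_⟩
    · simpa using pow_mul_divByMonic_rootMultiplicity_eq P 0
    · simpa using eval_divByMonic_pow_rootMultiplicity_ne_zero 0 hP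
  obtain ⟨Q0, hPQ, hQ0e⟩ := hsplit0
  have hQcoeff : ∀ i, |Q0.coeff i| ≤ (l:ℤ) := by
    intro i
    have := hcoeff (i + m)
    rwa [← hPQ, coeff_X_pow_mul] at this
  set Qc : Polynomial ℂ := Q0.map (algebraMap ℤ ℂ) with hQc
  have hPcQ : Pc = X ^ m * Qc := by
    rw [hPc, ← hPQ, Polynomial.map_mul, Polynomial.map_pow, map_X]
  have hQceval0 : Qc.eval 0 = ((Q0.eval 0 : ℤ) : ℂ) := by
    rw [hQc, eval_map, eval₂_at_zero, coeff_zero_eq_eval_zero]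
    rfl
  have h1Q : 1 ≤ ‖Qc.eval 0‖ := by
    rw [hQceval0, Complex.norm_intCast]
    exact_mod_cast Int.one_le_abs hQ0e
  have hrootsPc : Pc.roots = Multiset.replicate m 0 + Qc.roots := by
    have hne : (X:Polynomial ℂ) ^ m * Qc ≠ 0 := by rw [← hPcQ]; exact hPc0
    rw [hPcQ, roots_mul hne, roots_pow, roots_X, Multiset.nsmul_singleton]
  have hSQ : S ≤ Qc.roots := by
    rw [hSdef, hrootsPc, Multiset.filter_add]
    have hz : (Multiset.replicate m (0:ℂ)).filter pred = 0 := by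
      rw [Multiset.filter_eq_nil]
      intro a ha
      rw [Multiset.eq_of_mem_replicate ha]
      show ¬ ‖lam - 0‖ < ε / 2
      rw [sub_zero]
      push_neg
      linarith
    rw [hz, zero_add]
    exact Multiset.filter_le _ _
  set R : ℝ := 1 - ε/4 with hRdef
  have hR0 : 0 < R := hq0
  have hR1 : R < 1 := by rw [hRdef]; linarith
  set Mb : ℝ := (l:ℝ) * (4/ε) with hMbdef
  have hMb0 : 0 < Mb := by positivity
  have hMbound : ∀ w : ℂ, ‖w‖ = R → ‖Qc.eval w‖ ≤ Mb := by
    intro w hw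
    rw [eval_eq_sum_range]
    calc ‖∑ i ∈ Finset.range (Qc.natDegree+1), Qc.coeff i * w ^ i‖
        ≤ ∑ i ∈ Finset.range (Qc.natDegree+1), ‖Qc.coeff i * w ^ i‖ :=
          norm_sum_le _ _
      _ ≤ ∑ i ∈ Finset.range (Qc.natDegree+1), (l:ℝ) * R ^ i := by
          apply Finset.sum_le_sum
          intro i _
          rw [norm_mul, norm_pow, hw]
          apply mul_le_mul_of_nonneg_right ?_ (pow_nonneg hR0.le _)
          rw [hQc, coeff_map, show (algebraMap ℤ ℂ) (Q0.coeff i) = ((Q0.coeff i : ℤ) : ℂ) by rfl,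
            Complex.norm_intCast]
          exact_mod_cast hQcoeff i
      _ = (l:ℝ) * ∑ i ∈ Finset.range (Qc.natDegree+1), R ^ i := by rw [Finset.mul_sum]
      _ ≤ (l:ℝ) * (1 - R)⁻¹ :=
          mul_le_mul_of_nonneg_left (geom_bound R hR0.le hR1 _) (by positivity)
      _ = Mb := by
          rw [hMbdef, hRdef, show (1:ℝ) - (1 - ε/4) = ε/4 by ring, inv_div]
  have hjen := jensen Qc S hSQ R Mb hR0 hMbound
  have hSabs : ∀ x ∈ S.map norm, x ≤ 1 - ε/2 := by
    intro x hx
    obtain ⟨s, hs, rfl⟩ := Multiset.mem_map.mp hx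
    have hps : ‖lam - s‖ < ε/2 := (Multiset.mem_filter.mp hs).2
    have h1 : ‖s‖ ≤ ‖lam‖ + ‖s - lam‖ := by
      calc ‖s‖ = ‖lam + (s - lam)‖ := by ring_nf
        _ ≤ ‖lam‖ + ‖s - lam‖ := norm_add_le _ _
    rw [norm_sub_rev s lam] at h1
    linarith
  have hprodle : (S.map norm).prod ≤ (1 - ε/2)^k := by
    have := mprod_le (S.map norm) (1 - ε/2) (by
      intro x hx
      obtain ⟨s, _, rfl⟩ := Multiset.mem_map.mp hx
      exact norm_nonneg _) hSabs
    rwa [Multiset.card_map, ← hk] at this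
  have hRkMb : R ^ k ≤ Mb * (1-ε/2)^k := by
    calc R ^ k = 1 * R ^ k := (one_mul _).symm
      _ ≤ ‖Qc.eval 0‖ * R ^ k :=
          mul_le_mul_of_nonneg_right h1Q (pow_nonneg hR0.le k)
      _ ≤ Mb * (S.map norm).prod := by rw [hk]; exact hjen
      _ ≤ Mb * (1 - ε/2)^k := mul_le_mul_of_nonneg_left hprodle hMb0.le
  have hlogk : (k:ℝ) * τ ≤ L + G := by
    have h1 := (Real.log_le_log_iff (pow_pos hR0 k) (by positivity)).2 hRkMb
    rw [Real.log_pow, Real.log_mul (ne_of_gt hMb0) (ne_of_gt (pow_pos hhalf0 k)),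
      Real.log_pow, hMbdef, Real.log_mul (ne_of_gt hl0) (by positivity)] at h1
    have hτR : τ = Real.log R - Real.log (1 - ε/2) := by rw [hτdef, hRdef]
    rw [hτR, hLdef, hGdef]
    have hexp : (k:ℝ) * (Real.log R - Real.log (1 - ε/2))
        = (k:ℝ) * Real.log R - (k:ℝ) * Real.log (1 - ε/2) := by ring
    rw [hexp]
    linarith [h1]
  -- final contradiction
  have hck' : c * (2*A) ≤ τ * Real.log 3 := by
    have := min_le_right (1/2 : ℝ) (τ * Real.log 3 / (2 * A))
    rw [← hcdef] at this
    rwa [le_div_iff₀ (by positivity)] at this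
  have hLG : (0:ℝ) ≤ L + G := by linarith
  have s1 : L * τ ≤ c * (L + G) := by
    calc L * τ ≤ c * (k:ℝ) * τ := mul_le_mul_of_nonneg_right hLck hτ.le
      _ = c * ((k:ℝ) * τ) := by ring
      _ ≤ c * (L + G) := mul_le_mul_of_nonneg_left hlogk hc0.le
  have s3 : Real.log 3 * (L + G) ≤ L * A := by
    have h33 := mul_le_mul_of_nonneg_right hL3 hG.le
    rw [hAdef]
    ring_nf
    ring_nf at h33
    linarith [h33]
  have s2 : c * (L + G) * (2*A) ≤ τ * Real.log 3 * (L + G) := by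
    calc c * (L + G) * (2*A) = c * (2*A) * (L + G) := by ring
      _ ≤ τ * Real.log 3 * (L + G) := mul_le_mul_of_nonneg_right hck' hLG
  have s4 : τ * (Real.log 3 * (L + G)) ≤ τ * (L * A) :=
    mul_le_mul_of_nonneg_left s3 hτ.le
  have s5 : L * τ * (2*A) ≤ τ * (L * A) := by
    calc L * τ * (2*A) ≤ c * (L + G) * (2*A) :=
          mul_le_mul_of_nonneg_right s1 (by positivity)
      _ ≤ τ * Real.log 3 * (L + G) := s2
      _ = τ * (Real.log 3 * (L + G)) := by ring
      _ ≤ τ * (L * A) := s4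
  have hpos : 0 < L * τ * A := by positivity
  linarith [s5, hpos]
end

section
/- Let Γ be a countable abelian group and let μ, ν be probability measures on Γ with finite Shannon entropy. Then for every n ≥ 1, H(μ * ν^{*n}) - H(μ) ≤ n · (H(μ * ν) - H(μ)), where ν^{*n} is the n-fold convolution of ν with itself and H denotes Shannon entropy. -/
/-- Shannon entropy of a discrete probability measure. -/
noncomputable def pmfEntropy {α : Type*} (q : PMF α) : ℝ :=
  ∑' a, Real.negMulLog ((q a).toReal)

/-- Convolution of two discrete probability measures on an additive group. -/
noncomputable def pmfConv {G : Type*} [AddCommGroup G] (μ ν : PMF G) : PMF G :=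
  μ.bind fun x => ν.map fun y => x + y

/-- `n`-fold convolution power. -/
noncomputable def pmfConvPow {G : Type*} [AddCommGroup G] (ν : PMF G) : ℕ → PMF G
  | 0 => PMF.pure 0
  | n + 1 => pmfConv (pmfConvPow ν n) ν

open Real
namespace KV

variable {G : Type*} [AddCommGroup G]

/-- A probability density on a (countable-ish) type. -/
structure IsPdf {α : Type*} (f : α → ℝ) : Prop where
  nonneg : ∀ x, 0 ≤ f x
  summable : Summable f
  tsum_eq : ∑' x, f x = 1

noncomputable def conv (f g : G → ℝ) : G → ℝ := fun w => ∑' x, f x * g (w - x)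

noncomputable def ent {α : Type*} (f : α → ℝ) : ℝ := ∑' x, Real.negMulLog (f x)

noncomputable def ce {α : Type*} (f g : α → ℝ) : ℝ := ∑' x, f x * (-Real.log (g x))

lemma IsPdf.le_one {α : Type*} {f : α → ℝ} (hf : IsPdf f) (x : α) : f x ≤ 1 := by
  rw [← hf.tsum_eq]
  exact Summable.le_tsum hf.summable x fun j _ => hf.nonneg j

/-- Fubini for iterated sums of nonnegative reals. -/
lemma fubini_nonneg {β γ : Type*} {F : β → γ → ℝ} (h0 : ∀ b c, 0 ≤ F b c)
    (h1 : ∀ b, Summable (F b)) (h2 : Summable fun b => ∑' c, F b c) :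
    (∀ c, Summable fun b => F b c) ∧
      (Summable fun c => ∑' b, F b c) ∧ ∑' c, ∑' b, F b c = ∑' b, ∑' c, F b c := by
  have hs : Summable (Function.uncurry F) :=
    (summable_prod_of_nonneg (fun p => h0 p.1 p.2)).2 ⟨h1, h2⟩
  exact ⟨fun c => hs.prod_symm.prod_factor c, hs.prod_symm.prod, Summable.tsum_comm hs⟩

section basic

variable {f g : G → ℝ}

lemma summable_conv_term (hf : IsPdf f) (hg : IsPdf g) (w : G) :
    Summable fun x => f x * g (w - x) :=
  Summable.of_nonneg_of_le (fun x => mul_nonneg (hf.nonneg x) (hg.nonneg _))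
    (fun x => by
      have := hg.le_one (w - x)
      nlinarith [hf.nonneg x]) hf.summable

lemma conv_nonneg (hf : IsPdf f) (hg : IsPdf g) (w : G) : 0 ≤ conv f g w :=
  tsum_nonneg fun x => mul_nonneg (hf.nonneg x) (hg.nonneg _)

lemma le_conv (hf : IsPdf f) (hg : IsPdf g) (w x : G) : f x * g (w - x) ≤ conv f g w :=
  Summable.le_tsum (summable_conv_term hf hg w) x
    (fun j _ => mul_nonneg (hf.nonneg j) (hg.nonneg _))

lemma summable_translate (g : G → ℝ) (hg : Summable g) (x : G) :
    Summable fun w => g (w - x) :=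
  ((Equiv.subRight x).summable_iff (f := g)).2 hg

lemma tsum_translate (g : G → ℝ) (x : G) : ∑' w, g (w - x) = ∑' w, g w :=
  (Equiv.subRight x).tsum_eq g

lemma isPdf_conv (hf : IsPdf f) (hg : IsPdf g) : IsPdf (conv f g) := by
  have h1 : ∀ x, Summable fun w => f x * g (w - x) := fun x =>
    (summable_translate g hg.summable x).mul_left _
  have h2 : Summable fun x => ∑' w, f x * g (w - x) := by
    have : ∀ x, (∑' w, f x * g (w - x)) = f x := by
      intro x
      rw [tsum_mul_left, tsum_translate, hg.tsum_eq, mul_one]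
    exact (summable_congr (by simpa using fun x => (this x).symm)).1 hf.summable
  obtain ⟨hc1, hc2, hc3⟩ := fubini_nonneg
    (fun x w => mul_nonneg (hf.nonneg x) (hg.nonneg _)) h1 h2
  refine ⟨conv_nonneg hf hg, hc2, ?_⟩
  show (∑' w, ∑' x, f x * g (w - x)) = 1
  rw [hc3]
  have : ∀ x, (∑' w, f x * g (w - x)) = f x := fun x => by
    rw [tsum_mul_left, tsum_translate, hg.tsum_eq, mul_one]
  rw [tsum_congr this, hf.tsum_eq]

lemma summable_conv (hf : IsPdf f) (hg : IsPdf g) : Summable (conv f g) :=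
  (isPdf_conv hf hg).summable

lemma conv_comm (f g : G → ℝ) : conv f g = conv g f := by
  funext w
  show (∑' x, f x * g (w - x)) = ∑' x, g x * f (w - x)
  rw [← (Equiv.subLeft w).tsum_eq (fun x => g x * f (w - x))]
  refine tsum_congr fun x => ?_
  simp [mul_comm]

lemma conv_translate (f g : G → ℝ) (z : G) :
    conv (fun u => f (u - z)) g = fun w => conv f g (w - z) := by
  funext w
  show (∑' x, f (x - z) * g (w - x)) = ∑' x, f x * g (w - z - x)
  rw [← (Equiv.addRight z).tsum_eq (fun x => f (x - z) * g (w - x))]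
  refine tsum_congr fun x => ?_
  simp only [Equiv.coe_addRight, add_sub_cancel_right]
  ring_nf
  congr 2
  abel

lemma ent_translate (f : G → ℝ) (z : G) : ent (fun u => f (u - z)) = ent f :=
  tsum_translate (fun u => Real.negMulLog (f u)) z

lemma isPdf_translate (hf : IsPdf f) (z : G) : IsPdf (fun u => f (u - z)) :=
  ⟨fun u => hf.nonneg _, summable_translate f hf.summable z,
    by rw [tsum_translate, hf.tsum_eq]⟩

lemma summable_nl_translate (hf : Summable fun u => Real.negMulLog (f u)) (z : G) :
    Summable fun u => Real.negMulLog (f (u - z)) :=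
  summable_translate (fun u => Real.negMulLog (f u)) hf z

end basic


/-- termwise: `a * (-log b) ≤ negMulLog a + a * (-log c)` when `c * a ≤ b`. -/
lemma mul_neg_log_le {a b c : ℝ} (ha : 0 ≤ a) (hc : 0 < c) (hcb : c * a ≤ b) :
    a * (-Real.log b) ≤ Real.negMulLog a + a * (-Real.log c) := by
  rcases eq_or_lt_of_le ha with h | h
  · simp [← h]
  · have hca : 0 < c * a := mul_pos hc h
    have hb : 0 < b := lt_of_lt_of_le hca hcb
    have hlog : Real.log (c * a) ≤ Real.log b := Real.log_le_log hca hcb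
    rw [Real.log_mul (ne_of_gt hc) (ne_of_gt h)] at hlog
    have := mul_le_mul_of_nonneg_left (neg_le_neg hlog) ha
    simp only [Real.negMulLog, neg_mul]
    nlinarith

/-- Gibbs termwise inequality `x - y ≤ x log(x/y)`. -/
lemma sub_le_mul_log {x y : ℝ} (hx : 0 ≤ x) (hy : 0 < y) :
    x - y ≤ x * Real.log (x / y) := by
  rcases eq_or_lt_of_le hx with h | h
  · simp [← h]; linarith
  · have h1 : Real.log (y / x) ≤ y / x - 1 := Real.log_le_sub_one_of_pos (by positivity)
    have h2 : Real.log (x / y) = -Real.log (y / x) := by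
      rw [← Real.log_inv]; congr 1; field_simp
    have := mul_le_mul_of_nonneg_left h1 hx
    rw [h2]
    have hxy : x * (y / x - 1) = y - x := by field_simp
    nlinarith

section cesec
variable {α : Type*} {f g : α → ℝ}

lemma ce_term_nonneg (hf0 : ∀ x, 0 ≤ f x) (hg0 : ∀ x, 0 ≤ g x) (hg1 : ∀ x, g x ≤ 1)
    (x : α) : 0 ≤ f x * (-Real.log (g x)) :=
  mul_nonneg (hf0 x) (by simpa using Real.log_nonpos (hg0 x) (hg1 x))

lemma summable_ce {c : ℝ} (hf0 : ∀ x, 0 ≤ f x) (hg0 : ∀ x, 0 ≤ g x) (hg1 : ∀ x, g x ≤ 1)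
    (hc : 0 < c) (hcb : ∀ x, c * f x ≤ g x)
    (Hf : Summable fun x => Real.negMulLog (f x)) (hfs : Summable f) :
    Summable fun x => f x * (-Real.log (g x)) := by
  have hbound : ∀ x, f x * (-Real.log (g x)) ≤
      Real.negMulLog (f x) + f x * (-Real.log c) := fun x =>
    mul_neg_log_le (hf0 x) hc (hcb x)
  exact Summable.of_nonneg_of_le (ce_term_nonneg hf0 hg0 hg1) hbound
    (Hf.add (hfs.mul_right _))

end cesec
lemma gibbs {ι : Type*} {a b : ι → ℝ} (ha : ∀ i, 0 ≤ a i) (hb : ∀ i, 0 ≤ b i)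
    (hsa : Summable a) (hsb : Summable b) {c : ℝ} (hc : 0 < c) (hcb : ∀ i, c * a i ≤ b i)
    (hs1 : Summable fun i => Real.negMulLog (a i))
    (hs2 : Summable fun i => a i * (-Real.log (b i))) :
    (∑' i, a i) * (-Real.log (∑' i, b i)) + ∑' i, Real.negMulLog (a i)
      ≤ Real.negMulLog (∑' i, a i) + ∑' i, a i * (-Real.log (b i)) := by
  set A := ∑' i, a i with hAdef
  set B := ∑' i, b i with hBdef
  have hA0 : 0 ≤ A := tsum_nonneg ha
  rcases eq_or_lt_of_le hA0 with hA | hA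
  · have haz : ∀ i, a i = 0 := by
      intro i
      have h1 : a i ≤ A := Summable.le_tsum hsa i fun j _ => ha j
      linarith [ha i]
    have h1 : (∑' i, Real.negMulLog (a i)) = 0 := by
      rw [tsum_congr (fun i => by rw [haz i, Real.negMulLog_zero]), tsum_zero]
    have h2 : (∑' i, a i * (-Real.log (b i))) = 0 := by
      rw [tsum_congr (fun i => by rw [haz i, zero_mul]), tsum_zero]
    rw [h1, h2, ← hA]
    simp
  · have hBc : c * A ≤ B := by
      rw [← tsum_mul_left]
      exact Summable.tsum_le_tsum hcb (hsa.mul_left c) hsb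
    have hB0 : 0 < B := lt_of_lt_of_le (by positivity) hBc
    have key : ∀ i, a i - b i * (A / B) ≤ a i * Real.log (a i * B / (b i * A)) := by
      intro i
      rcases eq_or_lt_of_le (ha i) with h | h
      · rw [← h]
        simp only [zero_mul, zero_sub, neg_nonpos]
        exact mul_nonneg (hb i) (by positivity)
      · have hbi : 0 < b i := lt_of_lt_of_le (by positivity) (hcb i)
        have heq : a i * B / (b i * A) = a i / (b i * (A / B)) := by
          field_simp
        rw [heq]
        exact sub_le_mul_log (ha i) (by positivity)
    have eq1 : ∀ i, a i * Real.log (a i * B / (b i * A)) =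
        (a i * (-Real.log (b i)) - Real.negMulLog (a i)) - a i * Real.log (A / B) := by
      intro i
      rcases eq_or_lt_of_le (ha i) with h | h
      · rw [← h]; simp [Real.negMulLog_zero]
      · have hbi : 0 < b i := lt_of_lt_of_le (by positivity) (hcb i)
        rw [Real.log_div (by positivity) (by positivity),
          Real.log_mul (ne_of_gt h) (ne_of_gt hB0),
          Real.log_mul (ne_of_gt hbi) (ne_of_gt hA),
          Real.log_div (ne_of_gt hA) (ne_of_gt hB0), Real.negMulLog]
        ring
    have hsumt : Summable fun i =>
        (a i * (-Real.log (b i)) - Real.negMulLog (a i)) - a i * Real.log (A / B) :=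
      (hs2.sub hs1).sub (hsa.mul_right _)
    have h2 : (0 : ℝ) ≤ ∑' i, a i * Real.log (a i * B / (b i * A)) := by
      have hle := Summable.tsum_le_tsum key (hsa.sub (hsb.mul_right _))
        ((summable_congr eq1).2 hsumt)
      have hz : (∑' i, (a i - b i * (A / B))) = 0 := by
        rw [Summable.tsum_sub hsa (hsb.mul_right _), tsum_mul_right, ← hAdef, ← hBdef]
        field_simp
        ring
      linarith [hz ▸ hle]
    rw [tsum_congr eq1, Summable.tsum_sub (hs2.sub hs1) (hsa.mul_right _),
      Summable.tsum_sub hs2 hs1, tsum_mul_right] at h2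
    have hlog : Real.log (A / B) = Real.log A - Real.log B :=
      Real.log_div (ne_of_gt hA) (ne_of_gt hB0)
    have hnml : Real.negMulLog A = -A * Real.log A := rfl
    nlinarith [h2, hlog, hnml]

variable {G : Type*} [AddCommGroup G] {f g : G → ℝ}

lemma negMulLog_eq' (t : ℝ) : Real.negMulLog t = t * (-Real.log t) := by
  rw [Real.negMulLog]; ring

lemma mul_neg_log_le' {a b : ℝ} (ha : 0 ≤ a) (hab : a ≤ b) :
    a * (-Real.log b) ≤ Real.negMulLog a := by
  simpa using mul_neg_log_le ha one_pos (by linarith)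

lemma ent_conv (hf : IsPdf f) (hg : IsPdf g)
    (Hf : Summable fun x => Real.negMulLog (f x))
    (Hg : Summable fun x => Real.negMulLog (g x)) :
    (Summable fun w => Real.negMulLog (conv f g w)) ∧ ent (conv f g) ≤ ent f + ent g := by
  have hnlf : ∀ x, 0 ≤ Real.negMulLog (f x) := fun x =>
    Real.negMulLog_nonneg (hf.nonneg x) (hf.le_one x)
  have hnlg : ∀ x, 0 ≤ Real.negMulLog (g x) := fun x =>
    Real.negMulLog_nonneg (hg.nonneg x) (hg.le_one x)
  set F : G → G → ℝ := fun x w => Real.negMulLog (f x * g (w - x)) with hF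
  have hF0 : ∀ x w, 0 ≤ F x w := fun x w =>
    Real.negMulLog_nonneg (mul_nonneg (hf.nonneg x) (hg.nonneg _))
      (mul_le_one₀ (hf.le_one x) (hg.nonneg _) (hg.le_one _))
  have hFeq : ∀ x w, F x w
      = g (w - x) * Real.negMulLog (f x) + f x * Real.negMulLog (g (w - x)) := by
    intro x w; rw [hF]; exact Real.negMulLog_mul _ _
  have h1 : ∀ x, Summable (F x) := by
    intro x
    rw [summable_congr (hFeq x)]
    refine Summable.add ?_ ?_
    · exact ((summable_translate g hg.summable x).mul_right _)
    · exact ((summable_nl_translate Hg x).mul_left _)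
  have hsum1 : ∀ x, (∑' w, F x w) = Real.negMulLog (f x) + f x * ent g := by
    intro x
    rw [tsum_congr (hFeq x), Summable.tsum_add ((summable_translate g hg.summable x).mul_right _)
      ((summable_nl_translate Hg x).mul_left _), tsum_mul_right, tsum_mul_left,
      tsum_translate, hg.tsum_eq, one_mul,
      tsum_translate (fun u => Real.negMulLog (g u)) x]
    rfl
  have h2 : Summable fun x => ∑' w, F x w := by
    rw [summable_congr hsum1]
    exact Hf.add (hf.summable.mul_right _)
  obtain ⟨hc1, hc2, hc3⟩ := fubini_nonneg hF0 h1 h2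
  have hDsum : (∑' w, ∑' x, F x w) = ent f + ent g := by
    rw [hc3, tsum_congr hsum1, Summable.tsum_add Hf (hf.summable.mul_right _), tsum_mul_right,
      hf.tsum_eq, one_mul]
    rfl
  have hbound : ∀ w, Real.negMulLog (conv f g w) ≤ ∑' x, F x w := by
    intro w
    rw [negMulLog_eq']
    show conv f g w * (-Real.log (conv f g w)) ≤ _
    rw [show conv f g w * (-Real.log (conv f g w))
        = ∑' x, (f x * g (w - x)) * (-Real.log (conv f g w)) by
      rw [tsum_mul_right]; rfl]
    refine Summable.tsum_le_tsum (fun x => ?_) ((summable_conv_term hf hg w).mul_right _) (hc1 w)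
    exact mul_neg_log_le' (mul_nonneg (hf.nonneg x) (hg.nonneg _)) (le_conv hf hg w x)
  have hS : Summable fun w => Real.negMulLog (conv f g w) :=
    Summable.of_nonneg_of_le
      (fun w => Real.negMulLog_nonneg (conv_nonneg hf hg w) ((isPdf_conv hf hg).le_one w))
      hbound hc2
  refine ⟨hS, ?_⟩
  calc ent (conv f g) ≤ ∑' w, ∑' x, F x w := Summable.tsum_le_tsum hbound hS hc2
  _ = ent f + ent g := hDsum


section mixture
variable {G : Type*} [AddCommGroup G] {f s : G → ℝ}

lemma mixture (hf : IsPdf f) (hs : IsPdf s)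
    (Hfs : Summable fun w => Real.negMulLog (conv f s w)) :
    (Summable fun z => s z * ce (fun u => f (u - z)) (conv f s)) ∧
      (∑' z, s z * ce (fun u => f (u - z)) (conv f s)) = ent (conv f s) := by
  have hfs := isPdf_conv hf hs
  have hlog : ∀ u, 0 ≤ -Real.log (conv f s u) := fun u => by
    simpa using Real.log_nonpos (hfs.nonneg u) (hfs.le_one u)
  set F : G → G → ℝ := fun u z => (s z * f (u - z)) * (-Real.log (conv f s u)) with hFdef
  have h0 : ∀ u z, 0 ≤ F u z := fun u z =>
    mul_nonneg (mul_nonneg (hs.nonneg z) (hf.nonneg _)) (hlog u)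
  have hsz : ∀ u, Summable fun z => s z * f (u - z) := fun u =>
    Summable.of_nonneg_of_le (fun z => mul_nonneg (hs.nonneg z) (hf.nonneg _))
      (fun z => by have := hf.le_one (u - z); nlinarith [hs.nonneg z]) hs.summable
  have h1 : ∀ u, Summable (F u) := fun u => (hsz u).mul_right _
  have hconvswap : ∀ u, (∑' z, s z * f (u - z)) = conv f s u := by
    intro u
    rw [conv_comm f s]
    rfl
  have hsumu : ∀ u, (∑' z, F u z) = Real.negMulLog (conv f s u) := by
    intro u
    rw [hFdef]
    simp only
    rw [tsum_mul_right, hconvswap, ← negMulLog_eq']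
  have h2 : Summable fun u => ∑' z, F u z := by
    rw [summable_congr hsumu]; exact Hfs
  obtain ⟨hc1, hc2, hc3⟩ := fubini_nonneg h0 h1 h2
  have hzsum : ∀ z, (∑' u, F u z) = s z * ce (fun u => f (u - z)) (conv f s) := by
    intro z
    rw [ce, ← tsum_mul_left]
    exact tsum_congr fun u => by rw [hFdef]; ring
  constructor
  · rw [← summable_congr hzsum]; exact hc2
  · rw [← tsum_congr hzsum, hc3, tsum_congr hsumu]; rfl

end mixture

section dp
variable {G : Type*} [AddCommGroup G] {f g q : G → ℝ}

lemma conv_mono {c : ℝ} (hq : IsPdf q) (hf : IsPdf f) (hg : IsPdf g)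
    (hfg : ∀ u, c * f u ≤ g u) (w : G) : c * conv q f w ≤ conv q g w := by
  show c * (∑' y, q y * f (w - y)) ≤ ∑' y, q y * g (w - y)
  rw [← tsum_mul_left]
  refine Summable.tsum_le_tsum (fun y => ?_) ((summable_conv_term hq hf w).mul_left c)
    (summable_conv_term hq hg w)
  calc c * (q y * f (w - y)) = q y * (c * f (w - y)) := by ring
  _ ≤ q y * g (w - y) := mul_le_mul_of_nonneg_left (hfg _) (hq.nonneg y)

lemma dp (hf : IsPdf f) (hg : IsPdf g) (hq : IsPdf q)
    {c : ℝ} (hc : 0 < c) (hfg : ∀ u, c * f u ≤ g u)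
    (Hf : Summable fun x => Real.negMulLog (f x))
    (Hq : Summable fun x => Real.negMulLog (q x))
    (Hqf : Summable fun w => Real.negMulLog (conv q f w)) :
    ce (conv q f) (conv q g) + ent f ≤ ent (conv q f) + ce f g := by
  have hnlq : ∀ x, 0 ≤ Real.negMulLog (q x) := fun x =>
    Real.negMulLog_nonneg (hq.nonneg x) (hq.le_one x)
  have hnlf : ∀ x, 0 ≤ Real.negMulLog (f x) := fun x =>
    Real.negMulLog_nonneg (hf.nonneg x) (hf.le_one x)
  -- the cross-entropy summand for (f, g)
  have hXsum : Summable fun u => f u * (-Real.log (g u)) :=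
    summable_ce hf.nonneg hg.nonneg hg.le_one hc hfg Hf hf.summable
  have hX0 : ∀ u, 0 ≤ f u * (-Real.log (g u)) :=
    ce_term_nonneg hf.nonneg hg.nonneg hg.le_one
  -- families
  set F1 : G → G → ℝ := fun y w => f (w - y) * Real.negMulLog (q y) with hF1
  set F2 : G → G → ℝ := fun y w => q y * Real.negMulLog (f (w - y)) with hF2
  set F3 : G → G → ℝ := fun y w => q y * (f (w - y) * (-Real.log (g (w - y)))) with hF3
  have hF10 : ∀ y w, 0 ≤ F1 y w := fun y w => mul_nonneg (hf.nonneg _) (hnlq y)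
  have hF20 : ∀ y w, 0 ≤ F2 y w := fun y w => mul_nonneg (hq.nonneg y) (hnlf _)
  have hF30 : ∀ y w, 0 ≤ F3 y w := fun y w => mul_nonneg (hq.nonneg y) (hX0 _)
  have hF1y : ∀ y, Summable (F1 y) := fun y =>
    (summable_translate f hf.summable y).mul_right _
  have hF2y : ∀ y, Summable (F2 y) := fun y =>
    (summable_nl_translate Hf y).mul_left _
  have hF3y : ∀ y, Summable (F3 y) := fun y =>
    ((summable_translate (fun u => f u * (-Real.log (g u))) hXsum y).mul_left _)
  have hF1sum : ∀ y, (∑' w, F1 y w) = Real.negMulLog (q y) := fun y => by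
    rw [hF1]; simp only
    rw [tsum_mul_right, tsum_translate f y, hf.tsum_eq, one_mul]
  have hF2sum : ∀ y, (∑' w, F2 y w) = q y * ent f := fun y => by
    rw [hF2]; simp only
    rw [tsum_mul_left, tsum_translate (fun u => Real.negMulLog (f u)) y]; rfl
  have hF3sum : ∀ y, (∑' w, F3 y w) = q y * ce f g := fun y => by
    rw [hF3]; simp only
    rw [tsum_mul_left, tsum_translate (fun u => f u * (-Real.log (g u))) y]; rfl
  have hF1S : Summable fun y => ∑' w, F1 y w := by rw [summable_congr hF1sum]; exact Hq
  have hF2S : Summable fun y => ∑' w, F2 y w := by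
    rw [summable_congr hF2sum]; exact hq.summable.mul_right _
  have hF3S : Summable fun y => ∑' w, F3 y w := by
    rw [summable_congr hF3sum]; exact hq.summable.mul_right _
  obtain ⟨hN1w, hN1S, hN1tsum⟩ := fubini_nonneg hF10 hF1y hF1S
  obtain ⟨hN2w, hN2S, hN2tsum⟩ := fubini_nonneg hF20 hF2y hF2S
  obtain ⟨hN3w, hN3S, hN3tsum⟩ := fubini_nonneg hF30 hF3y hF3S
  have hN1val : (∑' w, ∑' y, F1 y w) = ent q := by
    rw [hN1tsum, tsum_congr hF1sum]; rfl
  have hN2val : (∑' w, ∑' y, F2 y w) = ent f := by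
    rw [hN2tsum, tsum_congr hF2sum, tsum_mul_right, hq.tsum_eq, one_mul]
  have hN3val : (∑' w, ∑' y, F3 y w) = ce f g := by
    rw [hN3tsum, tsum_congr hF3sum, tsum_mul_right, hq.tsum_eq, one_mul]
  -- per-w application of gibbs
  have hqg := isPdf_conv hq hg
  have hqf := isPdf_conv hq hf
  have main : ∀ w, conv q f w * (-Real.log (conv q g w)) + ((∑' y, F1 y w) + ∑' y, F2 y w)
      ≤ Real.negMulLog (conv q f w) + ((∑' y, F1 y w) + ∑' y, F3 y w) := by
    intro w
    have ha : ∀ y, 0 ≤ q y * f (w - y) := fun y => mul_nonneg (hq.nonneg y) (hf.nonneg _)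
    have hb : ∀ y, 0 ≤ q y * g (w - y) := fun y => mul_nonneg (hq.nonneg y) (hg.nonneg _)
    have hb1 : ∀ y, q y * g (w - y) ≤ 1 := fun y =>
      mul_le_one₀ (hq.le_one y) (hg.nonneg _) (hg.le_one _)
    have hcb : ∀ y, c * (q y * f (w - y)) ≤ q y * g (w - y) := fun y => by
      calc c * (q y * f (w - y)) = q y * (c * f (w - y)) := by ring
      _ ≤ q y * g (w - y) := mul_le_mul_of_nonneg_left (hfg _) (hq.nonneg y)
    have hs1eq : ∀ y, Real.negMulLog (q y * f (w - y)) = F1 y w + F2 y w := by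
      intro y
      rw [Real.negMulLog_mul, hF1, hF2]
    have hs1 : Summable fun y => Real.negMulLog (q y * f (w - y)) := by
      rw [summable_congr hs1eq]
      exact ((hN1w w).add (hN2w w))
    have hs2 : Summable fun y => (q y * f (w - y)) * (-Real.log (q y * g (w - y))) :=
      summable_ce ha hb hb1 hc hcb hs1 (summable_conv_term hq hf w)
    have hg2 := gibbs ha hb (summable_conv_term hq hf w) (summable_conv_term hq hg w)
      hc hcb hs1 hs2
    have e1 : (∑' y, q y * f (w - y)) = conv q f w := rfl
    have e2 : (∑' y, q y * g (w - y)) = conv q g w := rfl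
    have e3 : (∑' y, Real.negMulLog (q y * f (w - y))) = (∑' y, F1 y w) + ∑' y, F2 y w := by
      rw [tsum_congr hs1eq, Summable.tsum_add (hN1w w) (hN2w w)]
    have e4 : ∀ y, (q y * f (w - y)) * (-Real.log (q y * g (w - y))) = F1 y w + F3 y w := by
      intro y
      rcases eq_or_lt_of_le (hq.nonneg y) with h | h
      · rw [hF1, hF3]; simp only [← h, zero_mul, mul_zero, zero_add, Real.negMulLog_zero,
          mul_zero, zero_mul]
      rcases eq_or_lt_of_le (hf.nonneg (w - y)) with h2 | h2
      · rw [hF1, hF3]; simp only [← h2, mul_zero, zero_mul, Real.negMulLog_zero,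
          zero_mul, mul_zero, zero_add, add_zero]
      · have hgpos : 0 < g (w - y) := lt_of_lt_of_le (by positivity) (hfg (w - y))
        rw [Real.log_mul (ne_of_gt h) (ne_of_gt hgpos), hF1, hF3]
        simp only [Real.negMulLog]
        ring
    have e5 : (∑' y, (q y * f (w - y)) * (-Real.log (q y * g (w - y))))
        = (∑' y, F1 y w) + ∑' y, F3 y w := by
      rw [tsum_congr e4, Summable.tsum_add (hN1w w) (hN3w w)]
    rw [e1, e2, e3, e5] at hg2
    exact hg2
  -- sum over w
  have hAB : Summable fun w => conv q f w * (-Real.log (conv q g w)) :=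
    summable_ce hqf.nonneg hqg.nonneg hqg.le_one hc (conv_mono hq hf hg hfg) Hqf hqf.summable
  have hLS : Summable fun w =>
      conv q f w * (-Real.log (conv q g w)) + ((∑' y, F1 y w) + ∑' y, F2 y w) :=
    hAB.add (hN1S.add hN2S)
  have hRS : Summable fun w =>
      Real.negMulLog (conv q f w) + ((∑' y, F1 y w) + ∑' y, F3 y w) :=
    Hqf.add (hN1S.add hN3S)
  have hfinal := Summable.tsum_le_tsum main hLS hRS
  rw [Summable.tsum_add hAB (hN1S.add hN2S), Summable.tsum_add hN1S hN2S,
    Summable.tsum_add Hqf (hN1S.add hN3S), Summable.tsum_add hN1S hN3S, hN1val, hN2val, hN3val] at hfinal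
  have hce1 : (∑' w, conv q f w * (-Real.log (conv q g w))) = ce (conv q f) (conv q g) := rfl
  have hent : (∑' w, Real.negMulLog (conv q f w)) = ent (conv q f) := rfl
  rw [hce1, hent] at hfinal
  linarith

end dp

section key
variable {G : Type*} [AddCommGroup G] {f q s : G → ℝ}

lemma key (hf : IsPdf f) (hq : IsPdf q) (hs : IsPdf s)
    (Hf : Summable fun x => Real.negMulLog (f x))
    (Hq : Summable fun x => Real.negMulLog (q x))
    (Hs : Summable fun x => Real.negMulLog (s x))
    (hassoc : conv q (conv f s) = conv (conv f q) s) :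
    ent (conv (conv f q) s) + ent f ≤ ent (conv f q) + ent (conv f s) := by
  set α := conv f q with hα
  set lam := conv f s with hlam
  have hαp : IsPdf α := isPdf_conv hf hq
  have hlamp : IsPdf lam := isPdf_conv hf hs
  obtain ⟨Hα, -⟩ := ent_conv hf hq Hf Hq
  obtain ⟨Hlam, -⟩ := ent_conv hf hs Hf Hs
  obtain ⟨Hαs, -⟩ := ent_conv hαp hs Hα Hs
  obtain ⟨S1, E1⟩ := mixture hf hs Hlam
  obtain ⟨S2, E2⟩ := mixture hαp hs Hαs
  have hper : ∀ z, s z * (ce (fun u => α (u - z)) (conv α s) + ent f)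
      ≤ s z * (ent α + ce (fun u => f (u - z)) lam) := by
    intro z
    rcases eq_or_lt_of_le (hs.nonneg z) with h | h
    · rw [← h, zero_mul, zero_mul]
    · refine mul_le_mul_of_nonneg_left ?_ (hs.nonneg z)
      have htr : conv q (fun u => f (u - z)) = fun w => α (w - z) := by
        rw [conv_comm, conv_translate, hα]
      have hfg : ∀ u, s z * f (u - z) ≤ lam u := by
        intro u
        have := le_conv hf hs u (u - z)
        rw [sub_sub_cancel] at this
        linarith [this]
      have Hqf : Summable fun w => Real.negMulLog (conv q (fun u => f (u - z)) w) := by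
        rw [htr]
        exact summable_nl_translate Hα z
      have hdp := dp (isPdf_translate hf z) hlamp hq h hfg
        (summable_nl_translate Hf z) Hq Hqf
      rw [htr, hassoc] at hdp
      have hce : ce (fun w => α (w - z)) (conv α s) = ce (fun u => α (u - z)) (conv α s) := rfl
      have hentf : ent (fun u => f (u - z)) = ent f := ent_translate f z
      have hentα : ent (fun w => α (w - z)) = ent α := ent_translate α z
      rw [hce, hentf, hentα] at hdp
      linarith
  have hLS : Summable fun z => s z * (ce (fun u => α (u - z)) (conv α s) + ent f) := by
    refine (summable_congr (fun z => ?_)).2 (S2.add (hs.summable.mul_right (ent f)))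
    ring
  have hRS : Summable fun z => s z * (ent α + ce (fun u => f (u - z)) lam) := by
    refine (summable_congr (fun z => ?_)).2 ((hs.summable.mul_right (ent α)).add S1)
    ring
  have hfinal := Summable.tsum_le_tsum hper hLS hRS
  have hLSval : (∑' z, s z * (ce (fun u => α (u - z)) (conv α s) + ent f))
      = ent (conv α s) + ent f := by
    rw [tsum_congr (fun z => by ring :
        ∀ z, s z * (ce (fun u => α (u - z)) (conv α s) + ent f)
          = s z * ce (fun u => α (u - z)) (conv α s) + s z * ent f),
      Summable.tsum_add S2 (hs.summable.mul_right (ent f)), E2, tsum_mul_right, hs.tsum_eq, one_mul]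
  have hRSval : (∑' z, s z * (ent α + ce (fun u => f (u - z)) lam))
      = ent α + ent lam := by
    rw [tsum_congr (fun z => by ring :
        ∀ z, s z * (ent α + ce (fun u => f (u - z)) lam)
          = s z * ent α + s z * ce (fun u => f (u - z)) lam),
      Summable.tsum_add (hs.summable.mul_right (ent α)) S1, E1, tsum_mul_right, hs.tsum_eq, one_mul]
  rw [hLSval, hRSval] at hfinal
  exact hfinal

end key

section bridge
variable {G : Type*} [AddCommGroup G]

noncomputable def rf (μ : PMF G) : G → ℝ := fun x => (μ x).toReal

lemma pmf_ne_top (μ : PMF G) (x : G) : μ x ≠ ⊤ := by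
  intro h
  have h1 : μ x ≤ ∑' y, μ y := ENNReal.le_tsum x
  rw [μ.tsum_coe, h] at h1
  simp at h1

lemma isPdf_rf (μ : PMF G) : IsPdf (rf μ) := by
  refine ⟨fun x => ENNReal.toReal_nonneg, ?_, ?_⟩
  · exact ENNReal.summable_toReal (by rw [μ.tsum_coe]; exact ENNReal.one_ne_top)
  · rw [show (∑' x, rf μ x) = (∑' x, μ x).toReal from
      (ENNReal.tsum_toReal_eq (fun a => pmf_ne_top μ a)).symm, μ.tsum_coe, ENNReal.toReal_one]

lemma pmfEntropy_eq (μ : PMF G) : pmfEntropy μ = ent (rf μ) := rfl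

lemma pmfConv_apply (μ ν : PMF G) (w : G) : pmfConv μ ν w = ∑' x, μ x * ν (w - x) := by
  rw [pmfConv, PMF.bind_apply]
  refine tsum_congr fun x => ?_
  congr 1
  rw [PMF.map_apply]
  rw [tsum_eq_single (w - x) ?_]
  · rw [if_pos (by abel)]
  · intro b hb
    rw [if_neg]
    intro hw
    exact hb (by rw [hw]; abel)

lemma rf_conv (μ ν : PMF G) : rf (pmfConv μ ν) = conv (rf μ) (rf ν) := by
  funext w
  show (pmfConv μ ν w).toReal = _
  rw [pmfConv_apply,
    ENNReal.tsum_toReal_eq (fun x => ENNReal.mul_ne_top (pmf_ne_top μ x) (pmf_ne_top ν _))]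
  exact tsum_congr fun x => ENNReal.toReal_mul

lemma pmfConv_comm (μ ν : PMF G) : pmfConv μ ν = pmfConv ν μ := by
  apply PMF.ext; intro w
  rw [pmfConv_apply, pmfConv_apply,
    ← (Equiv.subLeft w).tsum_eq (fun x => ν x * μ (w - x))]
  refine tsum_congr fun x => ?_
  simp only [Equiv.subLeft_apply, sub_sub_cancel]
  exact mul_comm _ _

lemma pmfConv_assoc (μ ν σ : PMF G) :
    pmfConv (pmfConv μ ν) σ = pmfConv μ (pmfConv ν σ) := by
  apply PMF.ext; intro w
  rw [pmfConv_apply, pmfConv_apply]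
  calc (∑' x, pmfConv μ ν x * σ (w - x))
      = ∑' x, (∑' y, μ y * ν (x - y)) * σ (w - x) := by
        exact tsum_congr fun x => by rw [pmfConv_apply]
    _ = ∑' x, ∑' y, μ y * ν (x - y) * σ (w - x) := by
        exact tsum_congr fun x => (ENNReal.tsum_mul_right).symm
    _ = ∑' y, ∑' x, μ y * ν (x - y) * σ (w - x) := ENNReal.tsum_comm
    _ = ∑' y, μ y * ∑' x, ν (x - y) * σ (w - x) := by
        refine tsum_congr fun y => ?_
        rw [← ENNReal.tsum_mul_left]
        exact tsum_congr fun x => by rw [mul_assoc]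
    _ = ∑' y, μ y * pmfConv ν σ (w - y) := by
        refine tsum_congr fun y => ?_
        congr 1
        rw [pmfConv_apply, ← (Equiv.addRight y).tsum_eq (fun x => ν (x - y) * σ (w - x))]
        refine tsum_congr fun x => ?_
        simp only [Equiv.coe_addRight, add_sub_cancel_right]
        congr 2
        abel

end bridge

section final
variable {G : Type*} [AddCommGroup G]

lemma summable_nl_pow (ν : PMF G) (hν : Summable fun a => Real.negMulLog ((ν a).toReal)) :
    ∀ n, Summable fun x => Real.negMulLog (rf (pmfConvPow ν n) x) := by
  intro n
  induction n with
  | zero =>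
    refine (summable_congr (fun x => ?_)).2 (summable_zero : Summable (fun _ : G => (0:ℝ)))
    show Real.negMulLog (rf (PMF.pure 0) x) = (0 : ℝ)
    rw [rf]
    simp only [PMF.pure_apply]
    by_cases h : x = 0 <;> simp [h]
  | succ n ih =>
    show Summable fun x => Real.negMulLog (rf (pmfConv (pmfConvPow ν n) ν) x)
    rw [show (fun x => Real.negMulLog (rf (pmfConv (pmfConvPow ν n) ν) x))
        = fun x => Real.negMulLog (conv (rf (pmfConvPow ν n)) (rf ν) x) by
      rw [rf_conv]]
    exact (ent_conv (isPdf_rf _) (isPdf_rf ν) ih hν).1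

lemma pmfConvPow_one (ν : PMF G) : pmfConvPow ν 1 = ν := by
  show pmfConv (PMF.pure 0) ν = ν
  rw [pmfConv, PMF.pure_bind]
  rw [show (fun y => (0 : G) + y) = id from funext fun y => zero_add y, PMF.map_id]

end final

end KV


/-- Kaimanovich–Vershik: for probability measures `μ, ν` of finite entropy on a countable
abelian group, `H(μ * ν^{*n}) - H(μ) ≤ n (H(μ*ν) - H(μ))`. -/
theorem stmt6 {G : Type*} [AddCommGroup G] [Countable G] (μ ν : PMF G)
    (hμ : Summable fun a => Real.negMulLog ((μ a).toReal))
    (hν : Summable fun a => Real.negMulLog ((ν a).toReal)) :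
    ∀ n : ℕ, 1 ≤ n →
      pmfEntropy (pmfConv μ (pmfConvPow ν n)) - pmfEntropy μ ≤
        (n : ℝ) * (pmfEntropy (pmfConv μ ν) - pmfEntropy μ) := by

  intro n hn
  induction n, hn using Nat.le_induction with
  | base =>
    rw [KV.pmfConvPow_one, Nat.cast_one, one_mul]
  | succ n hn ih =>
    set σ := pmfConvPow ν n with hσ
    have hstep : pmfConv μ (pmfConvPow ν (n + 1)) = pmfConv (pmfConv μ ν) σ := by
      show pmfConv μ (pmfConv σ ν) = _
      rw [KV.pmfConv_comm σ ν, ← KV.pmfConv_assoc]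
    have hassoc : KV.conv (KV.rf ν) (KV.conv (KV.rf μ) (KV.rf σ))
        = KV.conv (KV.conv (KV.rf μ) (KV.rf ν)) (KV.rf σ) := by
      simp only [← KV.rf_conv]
      rw [← KV.pmfConv_assoc, KV.pmfConv_comm ν μ]
    have hkey := KV.key (KV.isPdf_rf μ) (KV.isPdf_rf ν) (KV.isPdf_rf σ)
      hμ hν (KV.summable_nl_pow ν hν n) hassoc
    simp only [← KV.rf_conv, ← KV.pmfEntropy_eq, ← hstep] at hkey
    push_cast
    nlinarith [hkey, ih]
end

section
/- For every M > 1 there exists η > 0 such that: for every probability measure μ on a countable torsion-free abelian group (e.g. the additive group of a field of characteristic 0) with H(μ) < M, and for all distinct elements a, b of the group, setting ν = (δ_a + δ_b)/2, one has H(ν * μ) > H(μ) + η. -/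
/-- Torsion-free additive monoid (definition removed from Mathlib; restored with its old meaning). -/
def AddMonoid.IsTorsionFree (G : Type*) [AddMonoid G] : Prop :=
  ∀ g : G, g ≠ 0 → ¬IsOfFinAddOrder g

/-- `u log u - u log v ≥ 2 √u (√u - √v)` for `u ≥ 0 < v`. -/
lemma aux_log_sqrt {u v : ℝ} (hu : 0 ≤ u) (hv : 0 < v) :
    2 * Real.sqrt u * (Real.sqrt u - Real.sqrt v) ≤ u * Real.log u - u * Real.log v := by
  rcases eq_or_lt_of_le hu with h | hu
  · simp [← h]
  · have hsu : (0:ℝ) < Real.sqrt u := Real.sqrt_pos.2 hu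
    have hsv : (0:ℝ) < Real.sqrt v := Real.sqrt_pos.2 hv
    have h1 : Real.log (Real.sqrt v / Real.sqrt u) ≤ Real.sqrt v / Real.sqrt u - 1 :=
      Real.log_le_sub_one_of_pos (by positivity)
    rw [Real.log_div (ne_of_gt hsv) (ne_of_gt hsu), Real.log_sqrt hv.le, Real.log_sqrt hu.le] at h1
    have h2 : u * (Real.log v / 2 - Real.log u / 2) ≤ u * (Real.sqrt v / Real.sqrt u - 1) :=
      mul_le_mul_of_nonneg_left h1 hu.le
    have hus : Real.sqrt u * Real.sqrt u = u := Real.mul_self_sqrt hu.le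
    have h3 : u * (Real.sqrt v / Real.sqrt u) = Real.sqrt u * Real.sqrt v := by
      field_simp
      rw [sq, hus]
    nlinarith [h2, h3]

/-- Pointwise Jensen–Shannon vs Hellinger bound. -/
lemma aux_js_ge (p q : ℝ) (hp : 0 ≤ p) (hq : 0 ≤ q) :
    (Real.sqrt p - Real.sqrt q)^2/4 ≤
      Real.negMulLog ((p+q)/2) - (Real.negMulLog p + Real.negMulLog q)/2 := by
  rcases eq_or_lt_of_le (by positivity : (0:ℝ) ≤ (p+q)/2) with hm | hm
  · have hp0 : p = 0 := by linarith
    have hq0 : q = 0 := by linarith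
    simp [hp0, hq0, Real.negMulLog_zero]
  · set m := (p+q)/2 with hmdef
    have h1 := aux_log_sqrt hp hm
    have h2 := aux_log_sqrt hq hm
    have hRHS : Real.negMulLog m - (Real.negMulLog p + Real.negMulLog q)/2
        = ((p * Real.log p - p * Real.log m) + (q * Real.log q - q * Real.log m))/2 := by
      simp only [Real.negMulLog_def]
      rw [hmdef]; ring
    rw [hRHS]
    set s := Real.sqrt p
    set t := Real.sqrt q
    set w := Real.sqrt m
    have hs : 0 ≤ s := Real.sqrt_nonneg _
    have ht : 0 ≤ t := Real.sqrt_nonneg _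
    have hw : 0 ≤ w := Real.sqrt_nonneg _
    have hsp : s^2 = p := Real.sq_sqrt hp
    have htq : t^2 = q := Real.sq_sqrt hq
    have hwm : w^2 = m := Real.sq_sqrt hm.le
    have key : (s - t)^2/4 ≤ (2 * s * (s - w) + 2 * t * (t - w))/2 := by
      have hw2 : 2 * w^2 = s^2 + t^2 := by rw [hwm, hsp, htq, hmdef]; ring
      nlinarith [sq_nonneg (s - t), sq_nonneg (s + t), sq_nonneg (s*s + t*t - 2*s*t),
        mul_nonneg (add_nonneg hs ht) hw, sq_nonneg (s*t - w*w), sq_nonneg (s + t - 2*w),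
        sq_nonneg w, mul_nonneg hs ht]
    calc (s - t)^2/4 ≤ (2 * s * (s - w) + 2 * t * (t - w))/2 := key
      _ ≤ _ := by linarith

/-- Pointwise upper bound: JS gap ≤ log 2 · m. -/
lemma aux_js_le (p q : ℝ) (hp : 0 ≤ p) (hq : 0 ≤ q) :
    Real.negMulLog ((p+q)/2) ≤
      (Real.negMulLog p + Real.negMulLog q)/2 + Real.log 2 * ((p+q)/2) := by
  rcases eq_or_lt_of_le (by positivity : (0:ℝ) ≤ (p+q)/2) with hm | hm
  · have hp0 : p = 0 := by linarith
    have hq0 : q = 0 := by linarith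
    simp [hp0, hq0, Real.negMulLog_zero]
  · set m := (p+q)/2 with hmdef
    have key : ∀ r : ℝ, 0 ≤ r → r ≤ 2*m → r * Real.log r - r * Real.log m ≤ r * Real.log 2 := by
      intro r hr hr2
      rcases eq_or_lt_of_le hr with h | hr
      · simp [← h]
      · have : Real.log r - Real.log m ≤ Real.log 2 := by
          rw [← Real.log_div (ne_of_gt hr) (ne_of_gt hm)]
          apply Real.log_le_log (by positivity)
          rw [div_le_iff₀ hm]; linarith
        nlinarith
    have h1 := key p hp (by linarith)
    have h2 := key q hq (by linarith)
    have hRHS : Real.negMulLog m - (Real.negMulLog p + Real.negMulLog q)/2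
        = ((p * Real.log p - p * Real.log m) + (q * Real.log q - q * Real.log m))/2 := by
      simp only [Real.negMulLog_def]
      rw [hmdef]; ring
    have hx : p * Real.log 2 + q * Real.log 2 = Real.log 2 * (2*m) := by rw [hmdef]; ring
    linarith

/-- Explicit formula for convolution with the fair two-point measure. -/
lemma aux_conv_apply {G : Type} [AddCommGroup G] (μ : PMF G) (a b : G) (hab : a ≠ b) (z : G) :
    (pmfConv ((PMF.uniformOfFintype Bool).map fun t => if t then a else b) μ) z
      = 2⁻¹ * μ (z - a) + 2⁻¹ * μ (z - b) := by
  classical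
  have hmap : ∀ x : G, (μ.map (fun y => x + y)) z = μ (z - x) := by
    intro x
    rw [PMF.map_apply, tsum_eq_single (z - x)]
    · rw [if_pos (by abel)]
    · intro y hy
      rw [if_neg]
      intro h
      exact hy (by rw [h]; abel)
  have hν : ∀ x : G, ((PMF.uniformOfFintype Bool).map fun t => if t then a else b) x
      = (if x = a then 2⁻¹ else 0) + (if x = b then 2⁻¹ else 0) := by
    intro x
    rw [PMF.map_apply, tsum_bool]
    norm_num [PMF.uniformOfFintype_apply]
    exact add_comm _ _
  unfold pmfConv
  rw [PMF.bind_apply]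
  have hz : ∀ x : G, (((PMF.uniformOfFintype Bool).map fun t => if t then a else b) x)
      * (μ.map (fun y => x + y)) z = (if x = a then 2⁻¹ * μ (z - a) else 0)
        + (if x = b then 2⁻¹ * μ (z - b) else 0) := by
    intro x
    rw [hν, hmap]
    by_cases h1 : x = a
    · subst h1
      simp [hab]
    · by_cases h2 : x = b
      · subst h2
        simp [h1]
      · simp [h1, h2]
  rw [tsum_congr hz, Summable.tsum_add ENNReal.summable ENNReal.summable,
    tsum_eq_single a (fun y hy => if_neg hy), tsum_eq_single b (fun y hy => if_neg hy),
    if_pos rfl, if_pos rfl]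

set_option maxHeartbeats 1600000 in
/-- Entropy increase under convolution by a fair two-point measure on a countable
torsion-free abelian group: for every `M > 1` there is `η > 0` such that for every `μ`
with finite entropy `H(μ) < M` and `a ≠ b`, setting `ν = (δ_a + δ_b)/2`,
`H(ν * μ) > H(μ) + η`. -/
theorem stmt7 (M : ℝ) (hM : 1 < M) :
    ∃ η > (0 : ℝ), ∀ (G : Type) [AddCommGroup G] [Countable G],
      AddMonoid.IsTorsionFree G →
      ∀ μ : PMF G, (Summable fun a => Real.negMulLog ((μ a).toReal)) →
        pmfEntropy μ < M →
      ∀ a b : G, a ≠ b →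
        pmfEntropy (pmfConv ((PMF.uniformOfFintype Bool).map fun t => if t then a else b) μ)
          > pmfEntropy μ + η := by
  classical
  set n : ℕ := ⌈(4:ℝ) * Real.exp M⌉₊ + 1 with hn
  have hn4 : 4 * Real.exp M ≤ (n : ℝ) := by
    calc 4 * Real.exp M ≤ (⌈(4:ℝ) * Real.exp M⌉₊ : ℝ) := Nat.le_ceil _
    _ ≤ n := by rw [hn]; push_cast; linarith
  have hnpos : 0 < (n:ℝ) := lt_of_lt_of_le (by positivity) hn4
  set ε : ℝ := Real.exp (-(M/2)) / (2 * n) with hε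
  have hεpos : 0 < ε := by positivity
  refine ⟨ε^2/8, by positivity, ?_⟩
  intro G _ _ htf μ hsum hHμ a b hab
  set F : G → ℝ := fun x => ((μ x).toReal) with hF
  have hF0 : ∀ x, 0 ≤ F x := fun x => ENNReal.toReal_nonneg
  have hF1 : ∀ x, F x ≤ 1 := by
    intro x
    have h := μ.coe_le_one x
    have := ENNReal.toReal_mono (by simp) h
    simpa using this
  have hFsum : Summable F := ENNReal.summable_toReal (by rw [PMF.tsum_coe]; exact ENNReal.one_ne_top)
  have hFtsum : ∑' x, F x = 1 := by
    have h := ENNReal.tsum_toReal_eq (fun x => PMF.apply_ne_top μ x)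
    rw [PMF.tsum_coe] at h
    simpa using h.symm
  set c : G := b - a with hc
  have hc0 : c ≠ 0 := sub_ne_zero.2 (Ne.symm hab)
  set f : G → ℝ := fun x => Real.sqrt (F x) with hf
  set p : G → ℝ := fun z => F (z - a) with hp
  set q : G → ℝ := fun z => F (z - b) with hq
  -- convolution formula, real version
  have hconv : ∀ z, ((pmfConv ((PMF.uniformOfFintype Bool).map fun t => if t then a else b) μ) z).toReal
      = (p z + q z)/2 := by
    intro z
    rw [aux_conv_apply μ a b hab z]
    rw [ENNReal.toReal_add (ENNReal.mul_ne_top (by simp) (PMF.apply_ne_top μ _))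
      (ENNReal.mul_ne_top (by simp) (PMF.apply_ne_top μ _)), ENNReal.toReal_mul, ENNReal.toReal_mul]
    simp only [hp, hq, hF]
    norm_num
    ring
  -- summability transfers
  have hsump : Summable (fun z => Real.negMulLog (p z)) :=
    ((Equiv.subRight a).summable_iff (f := fun x => Real.negMulLog (F x))).2 hsum
  have hsumq : Summable (fun z => Real.negMulLog (q z)) :=
    ((Equiv.subRight b).summable_iff (f := fun x => Real.negMulLog (F x))).2 hsum
  have htsump : ∑' z, Real.negMulLog (p z) = pmfEntropy μ :=
    (Equiv.subRight a).tsum_eq (fun x => Real.negMulLog (F x))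
  have htsumq : ∑' z, Real.negMulLog (q z) = pmfEntropy μ :=
    (Equiv.subRight b).tsum_eq (fun x => Real.negMulLog (F x))
  have hsumP : Summable p := ((Equiv.subRight a).summable_iff (f := F)).2 hFsum
  have hsumQ : Summable q := ((Equiv.subRight b).summable_iff (f := F)).2 hFsum
  have hm1 : ∀ z, (p z + q z)/2 ≤ 1 := by
    intro z
    have := hF1 (z - a); have := hF1 (z - b)
    simp only [hp, hq]
    linarith
  have hsumM : Summable (fun z => Real.negMulLog ((p z + q z)/2)) := by
    apply Summable.of_nonneg_of_le
      (fun z => Real.negMulLog_nonneg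
        (div_nonneg (add_nonneg (hF0 _) (hF0 _)) (by norm_num)) (hm1 z))
      (fun z => aux_js_le (p z) (q z) (hF0 _) (hF0 _))
    exact ((hsump.add hsumq).div_const 2).add (((hsumP.add hsumQ).div_const 2).mul_left (Real.log 2))
  have hHconv : pmfEntropy (pmfConv ((PMF.uniformOfFintype Bool).map fun t => if t then a else b) μ)
      = ∑' z, Real.negMulLog ((p z + q z)/2) := by
    unfold pmfEntropy
    exact tsum_congr (fun z => by rw [hconv z])
  have hsumAvg : Summable (fun z => (Real.negMulLog (p z) + Real.negMulLog (q z))/2) :=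
    (hsump.add hsumq).div_const 2
  have hJS : pmfEntropy (pmfConv ((PMF.uniformOfFintype Bool).map fun t => if t then a else b) μ)
      - pmfEntropy μ
      = ∑' z, (Real.negMulLog ((p z + q z)/2) - (Real.negMulLog (p z) + Real.negMulLog (q z))/2) := by
    rw [hHconv, Summable.tsum_sub hsumM hsumAvg]
    congr 1
    have : ∑' z, (Real.negMulLog (p z) + Real.negMulLog (q z))/2
        = (∑' z, (Real.negMulLog (p z) + Real.negMulLog (q z)))/2 := tsum_div_const
    rw [this, Summable.tsum_add hsump hsumq, htsump, htsumq]
    ring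
  -- Hellinger quantity
  have hD2sum' : Summable (fun z => (Real.sqrt (p z) - Real.sqrt (q z))^2) := by
    apply Summable.of_nonneg_of_le (fun z => sq_nonneg _) (fun z => ?_)
      ((hsumP.mul_left 2).add (hsumQ.mul_left 2))
    have h1 : Real.sqrt (p z)^2 = p z := Real.sq_sqrt (hF0 _)
    have h2 : Real.sqrt (q z)^2 = q z := Real.sq_sqrt (hF0 _)
    nlinarith [sq_nonneg (Real.sqrt (p z) + Real.sqrt (q z))]
  set D2 : ℝ := ∑' y, (f y - f (y - c))^2 with hD2
  have hD2sum : Summable (fun y : G => (f y - f (y - c))^2) := by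
    have hsumFc : Summable (fun y : G => F (y - c)) :=
      ((Equiv.subRight c).summable_iff (f := F)).2 hFsum
    apply Summable.of_nonneg_of_le (fun z => sq_nonneg _) (fun z => ?_)
      ((hFsum.mul_left 2).add (hsumFc.mul_left 2))
    have h1 : f z^2 = F z := Real.sq_sqrt (hF0 _)
    have h2 : f (z - c)^2 = F (z - c) := Real.sq_sqrt (hF0 _)
    nlinarith [sq_nonneg (f z + f (z - c))]
  have hD2eq : ∑' z, (Real.sqrt (p z) - Real.sqrt (q z))^2 = D2 := by
    rw [hD2, ← (Equiv.addRight a).tsum_eq (fun z => (Real.sqrt (p z) - Real.sqrt (q z))^2)]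
    apply tsum_congr
    intro y
    have h1 : y + a - a = y := by abel
    have h2 : y + a - b = y - c := by rw [hc]; abel
    simp only [hp, hq, hf, Equiv.coe_addRight]
    rw [h1, h2]
  have hD2nonneg : 0 ≤ D2 := tsum_nonneg (fun _ => sq_nonneg _)
  set d := Real.sqrt D2 with hd
  have hd0 : 0 ≤ d := Real.sqrt_nonneg _
  have hstep : ∀ y, |f y - f (y - c)| ≤ d := by
    intro y
    rw [hd, ← Real.sqrt_sq_eq_abs]
    exact Real.sqrt_le_sqrt (Summable.le_tsum hD2sum y (fun j _ => sq_nonneg _))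
  have htel : ∀ (x : G) (k : ℕ), |f (x + k • c) - f x| ≤ k * d := by
    intro x k
    induction k with
    | zero => simp
    | succ k ih =>
      have h1 : x + (k+1) • c - c = x + k • c := by rw [succ_nsmul]; abel
      have h2 := hstep (x + (k+1) • c)
      rw [h1] at h2
      calc |f (x + (k+1) • c) - f x|
          ≤ |f (x + (k+1) • c) - f (x + k • c)| + |f (x + k • c) - f x| := abs_sub_le _ _ _
        _ ≤ d + k * d := add_le_add h2 ih
        _ = ((k:ℝ)+1) * d := by ring
        _ = ((k+1 : ℕ) : ℝ) * d := by push_cast; ring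
  -- a large atom exists
  have hx0 : ∃ x₀, Real.exp (-M) < F x₀ := by
    by_contra h
    push_neg at h
    have hle : ∀ x, M * F x ≤ Real.negMulLog (F x) := by
      intro x
      rcases eq_or_lt_of_le (hF0 x) with h0 | h0
      · simp [← h0]
      · have hlog : Real.log (F x) ≤ -M := by
          calc Real.log (F x) ≤ Real.log (Real.exp (-M)) := Real.log_le_log h0 (h x)
          _ = -M := Real.log_exp _
        simp only [Real.negMulLog_def]
        have := mul_le_mul_of_nonneg_left hlog h0.le
        nlinarith
    have hMle : M ≤ pmfEntropy μ := by
      calc M = M * ∑' x, F x := by rw [hFtsum]; ring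
      _ = ∑' x, M * F x := tsum_mul_left.symm
      _ ≤ ∑' x, Real.negMulLog (F x) := Summable.tsum_le_tsum hle (hFsum.mul_left M) hsum
      _ = pmfEntropy μ := rfl
    linarith
  obtain ⟨x₀, hx₀⟩ := hx0
  -- injectivity of the orbit
  have hinj : ∀ k l : ℕ, k < l → x₀ + k • c ≠ x₀ + l • c := by
    intro k l hkl h
    have h1 : k • c = l • c := add_left_cancel h
    have h2 : (l - k) • c = 0 := by
      rw [sub_nsmul c hkl.le, ← h1]; abel
    exact htf c hc0 (isOfFinAddOrder_iff_nsmul_eq_zero.2 ⟨l - k, by omega, h2⟩)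
  have hsumbound : ∑ k ∈ Finset.range (n+1), F (x₀ + k • c) ≤ 1 := by
    have himg : ∑ x ∈ Finset.image (fun k : ℕ => x₀ + k • c) (Finset.range (n+1)), F x
        = ∑ k ∈ Finset.range (n+1), F (x₀ + k • c) := by
      apply Finset.sum_image
      intro x _ y _ hxy
      by_contra hne
      rcases lt_or_gt_of_ne hne with h | h
      exacts [hinj x y h hxy, hinj y x h hxy.symm]
    rw [← himg, ← hFtsum]
    exact Summable.sum_le_tsum _ (fun x _ => hF0 x) hFsum
  -- the key lower bound on d
  have hεd : ε ≤ d := by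
    by_contra hcon
    push_neg at hcon
    have hfx0 : Real.exp (-(M/2)) < f x₀ := by
      have hsq : Real.exp (-(M/2))^2 = Real.exp (-M) := by
        rw [sq, ← Real.exp_add]; congr 1; ring
      simp only [hf]
      rw [Real.lt_sqrt (Real.exp_nonneg _), hsq]
      exact hx₀
    have hdn : (n:ℝ) * d < Real.exp (-(M/2)) / 2 := by
      have h1 : (n:ℝ) * d < n * ε := mul_lt_mul_of_pos_left hcon hnpos
      have h2 : (n:ℝ) * ε = Real.exp (-(M/2)) / 2 := by
        rw [hε]; field_simp
      linarith
    have hterm : ∀ k ∈ Finset.range (n+1), Real.exp (-M)/4 ≤ F (x₀ + k • c) := by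
      intro k hk
      have hk' : (k:ℝ) ≤ n := by exact_mod_cast Nat.lt_succ_iff.1 (Finset.mem_range.1 hk)
      have h1 := htel x₀ k
      have h2 : (k:ℝ) * d ≤ n * d := mul_le_mul_of_nonneg_right hk' hd0
      have h3 : Real.exp (-(M/2))/2 < f (x₀ + k • c) := by
        have h4 := abs_le.1 h1
        nlinarith [hfx0, hdn]
      have h4 : F (x₀ + k • c) = f (x₀ + k • c)^2 := (Real.sq_sqrt (hF0 _)).symm
      have h5 : (Real.exp (-(M/2))/2)^2 = Real.exp (-M)/4 := by
        rw [div_pow, sq, ← Real.exp_add, show -(M/2) + -(M/2) = -M by ring]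
        norm_num
      rw [h4, ← h5]
      exact pow_le_pow_left₀ (by positivity) h3.le 2
    have hsum2 : ((n:ℝ)+1) * (Real.exp (-M)/4) ≤ 1 := by
      have h := Finset.card_nsmul_le_sum (Finset.range (n+1))
        (fun k => F (x₀ + k • c)) (Real.exp (-M)/4) hterm
      rw [Finset.card_range, nsmul_eq_mul] at h
      rw [Nat.cast_add, Nat.cast_one] at h
      linarith [hsumbound, h]
    have hexp : Real.exp M * Real.exp (-M) = 1 := by rw [← Real.exp_add]; simp
    have hkey : (4:ℝ) ≤ (n:ℝ) * Real.exp (-M) := by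
      calc (4:ℝ) = 4 * Real.exp M * Real.exp (-M) := by rw [mul_assoc, hexp]; ring
      _ ≤ (n:ℝ) * Real.exp (-M) := mul_le_mul_of_nonneg_right hn4 (Real.exp_pos _).le
    nlinarith [hsum2, hkey, Real.exp_pos (-M)]
  -- conclude
  have hD2ge : ε^2 ≤ D2 := by
    have h1 : ε^2 ≤ d^2 := pow_le_pow_left₀ hεpos.le hεd 2
    rwa [hd, Real.sq_sqrt hD2nonneg] at h1
  have hJSge : D2/4 ≤ pmfEntropy (pmfConv ((PMF.uniformOfFintype Bool).map fun t => if t then a else b) μ)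
      - pmfEntropy μ := by
    rw [hJS, ← hD2eq]
    have h1 : (∑' z, (Real.sqrt (p z) - Real.sqrt (q z))^2)/4
        = ∑' z, (Real.sqrt (p z) - Real.sqrt (q z))^2/4 := (tsum_div_const).symm
    rw [h1]
    exact Summable.tsum_le_tsum (fun z => aux_js_ge (p z) (q z) (hF0 _) (hF0 _))
      (hD2sum'.div_const 4) (hsumM.sub hsumAvg)
  linarith [hJSge, hD2ge, pow_pos hεpos 2]
end
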